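/- arXiv:1508.03555 — 2 statements merged into one kernel-verified Lean document; each statement's English description precedes it below -/
import Mathlib

section
/- Let (X_n)_{n∈ℤ} be a strictly stationary, strongly mixing sequence of nonnegative random variables such that X_1 is regularly varying with index α > 0, let (a_n) be positive reals with n·P(X_1 > a_n) → 1, and assume that for every u > 0, P(max_{1≤i≤n} X_i ≤ u·a_n) → exp(−u^{−α}) as n → ∞ (extremal index θ = 1). Then for every integer k ≠ 0 and every r ∈ (0,1), P( X_k > r·a_n | X_0 > a_n ) → 0 as n → ∞; that is, the tail process (Y_k) of (X_n) satisfies Y_k = 0 almost surely for all k ≠ 0. -/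
open MeasureTheory Filter Topology Finset
open scoped Classical
open scoped ENNReal

/-- The sequence `(X_i)_{i ∈ ℤ}` is strictly stationary: for every shift `h`, the law
of the shifted sequence equals the law of the sequence. -/
def StrictStationaryZ {Ω : Type*} [MeasurableSpace Ω] (P : Measure Ω)
    (X : ℤ → Ω → ℝ) : Prop :=
  ∀ h : ℤ, P.map (fun ω (i : ℤ) => X (i + h) ω) = P.map (fun ω (i : ℤ) => X i ω)

/-- The sequence `(X_i)_{i ∈ ℤ}` is strongly mixing (α-mixing): there are coefficients
`α_n → 0` bounding `|P(A ∩ B) − P(A)P(B)|` for `A ∈ σ(X_i : i ≤ j)` and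
`B ∈ σ(X_i : i ≥ j + n)`. -/
def StrongMixingZ {Ω : Type*} [MeasurableSpace Ω] (P : Measure Ω)
    (X : ℤ → Ω → ℝ) : Prop :=
  ∃ α : ℕ → ℝ, Tendsto α atTop (𝓝 0) ∧
    ∀ (n : ℕ) (j : ℤ) (A B : Set Ω),
      MeasurableSet[⨆ i ∈ {i : ℤ | i ≤ j}, MeasurableSpace.comap (X i) inferInstance] A →
      MeasurableSet[⨆ i ∈ {i : ℤ | j + (n : ℤ) ≤ i},
        MeasurableSpace.comap (X i) inferInstance] B →
      |(P (A ∩ B)).toReal - (P A).toReal * (P B).toReal| ≤ α n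

/-- A nonnegative random variable `X` is regularly varying with index `α > 0`:
`P(X > x) > 0` for all `x > 0` and `P(X > tx)/P(X > x) → t^(−α)` as `x → ∞`. -/
def RegularlyVaryingRV {Ω : Type*} [MeasurableSpace Ω] (P : Measure Ω)
    (X : Ω → ℝ) (α : ℝ) : Prop :=
  (∀ x : ℝ, 0 < x → 0 < P {ω | x < X ω}) ∧
  ∀ t : ℝ, 0 < t →
    Tendsto (fun x : ℝ => (P {ω | t * x < X ω}).toReal / (P {ω | x < X ω}).toReal)
      atTop (𝓝 (t ^ (-α)))


section helpers
variable {Ω : Type*} [MeasurableSpace Ω] (P : Measure Ω)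
variable (X : ℤ → Ω → ℝ)

lemma key_shift (hmeas : ∀ i, Measurable (X i))
    (hstat : ∀ h : ℤ, P.map (fun ω (i : ℤ) => X (i + h) ω) = P.map (fun ω (i : ℤ) => X i ω))
    (h : ℤ) (S : Set (ℤ → ℝ)) (hS : MeasurableSet S) :
    P {ω | (fun i => X (i + h) ω) ∈ S} = P {ω | (fun i => X i ω) ∈ S} := by
  have m1 : Measurable (fun ω (i : ℤ) => X (i + h) ω) :=
    measurable_pi_lambda _ fun i => hmeas _
  have m2 : Measurable (fun ω (i : ℤ) => X i ω) :=
    measurable_pi_lambda _ fun i => hmeas _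
  have e1 : P {ω | (fun i => X (i + h) ω) ∈ S} = P.map (fun ω (i : ℤ) => X (i + h) ω) S := by
    rw [Measure.map_apply m1 hS]; rfl
  have e2 : P {ω | (fun i => X i ω) ∈ S} = P.map (fun ω (i : ℤ) => X i ω) S := by
    rw [Measure.map_apply m2 hS]; rfl
  rw [e1, e2, hstat h]

end helpers

section helpers2
variable {Ω : Type*} [MeasurableSpace Ω] {P : Measure Ω}
variable {X : ℤ → Ω → ℝ}
set_option linter.unusedSectionVars false

variable (hmeas : ∀ i, Measurable (X i))
variable (hstat : ∀ h : ℤ, P.map (fun ω (i : ℤ) => X (i + h) ω) = P.map (fun ω (i : ℤ) => X i ω))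

include hmeas hstat

/-- one-dimensional marginal shift -/
lemma shift_one (i : ℤ) (u : ℝ) :
    P {ω | u < X i ω} = P {ω | u < X 1 ω} := by
  have hS : MeasurableSet {f : ℤ → ℝ | u < f 1} :=
    measurableSet_lt measurable_const (measurable_pi_apply 1)
  have := key_shift P X hmeas hstat (i - 1) _ hS
  simpa using this

/-- pair shift: `P(u < X (k0+h), v < X h) = P(u < X k0, v < X 0)` -/
lemma shift_pair (k0 h : ℤ) (u v : ℝ) :
    P ({ω | u < X (k0 + h) ω} ∩ {ω | v < X h ω})
      = P ({ω | u < X k0 ω} ∩ {ω | v < X 0 ω}) := by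
  have hS : MeasurableSet ({f : ℤ → ℝ | u < f k0} ∩ {f | v < f 0}) :=
    (measurableSet_lt measurable_const (measurable_pi_apply k0)).inter
      (measurableSet_lt measurable_const (measurable_pi_apply 0))
  have := key_shift P X hmeas hstat h _ hS
  rw [← Set.setOf_and, ← Set.setOf_and]
  simpa using this

/-- block shift: all-below event over an interval shifted by `c`. -/
lemma shift_block (c : ℤ) (m : ℕ) (u : ℝ) :
    P {ω | ∀ i ∈ Finset.Icc 1 m, X ((i : ℤ) + c) ω ≤ u}
      = P {ω | ∀ i ∈ Finset.Icc 1 m, X (i : ℤ) ω ≤ u} := by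
  have hS : MeasurableSet {f : ℤ → ℝ | ∀ i ∈ Finset.Icc 1 m, f (i : ℤ) ≤ u} := by
    have : {f : ℤ → ℝ | ∀ i ∈ Finset.Icc 1 m, f (i : ℤ) ≤ u}
        = ⋂ i ∈ (Finset.Icc 1 m : Finset ℕ), {f : ℤ → ℝ | f (i : ℤ) ≤ u} := by
      ext f; simp
    rw [this]
    exact MeasurableSet.biInter (Set.to_countable _)
      (fun i _ => measurableSet_le (measurable_pi_apply _) measurable_const)
  have := key_shift P X hmeas hstat c _ hS
  simpa using this

end helpers2

section sigma
variable {Ω : Type*} [MeasurableSpace Ω] {X : ℤ → Ω → ℝ}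

lemma measSet_le (X : ℤ → Ω → ℝ) {i j : ℤ} (hij : i ≤ j) {s : Set ℝ} (hs : MeasurableSet s) :
    MeasurableSet[⨆ i ∈ {i : ℤ | i ≤ j}, MeasurableSpace.comap (X i) inferInstance]
      (X i ⁻¹' s) := by
  have h1 : MeasurableSpace.comap (X i) inferInstance
      ≤ ⨆ i ∈ {i : ℤ | i ≤ j}, MeasurableSpace.comap (X i) inferInstance :=
    le_iSup₂ (f := fun (i : ℤ) (_ : i ∈ {i : ℤ | i ≤ j}) =>
      MeasurableSpace.comap (X i) inferInstance) i hij
  exact h1 _ ⟨s, hs, rfl⟩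

lemma measSet_ge (X : ℤ → Ω → ℝ) {i j : ℤ} (hij : j ≤ i) {s : Set ℝ} (hs : MeasurableSet s) :
    MeasurableSet[⨆ i ∈ {i : ℤ | j ≤ i}, MeasurableSpace.comap (X i) inferInstance]
      (X i ⁻¹' s) := by
  have h1 : MeasurableSpace.comap (X i) inferInstance
      ≤ ⨆ i ∈ {i : ℤ | j ≤ i}, MeasurableSpace.comap (X i) inferInstance :=
    le_iSup₂ (f := fun (i : ℤ) (_ : i ∈ {i : ℤ | j ≤ i}) =>
      MeasurableSpace.comap (X i) inferInstance) i hij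
  exact h1 _ ⟨s, hs, rfl⟩

end sigma


section chain
set_option linter.unusedSectionVars false
variable {Ω : Type*} [MeasurableSpace Ω] {P : Measure Ω} [IsProbabilityMeasure P]
variable {X : ℤ → Ω → ℝ}
variable (hmeas : ∀ i, Measurable (X i))
variable (hstat : ∀ h : ℤ, P.map (fun ω (i : ℤ) => X (i + h) ω) = P.map (fun ω (i : ℤ) => X i ω))

include hmeas in
lemma blk_measurable (c : ℤ) (m : ℕ) (u : ℝ) :
    MeasurableSet {ω | ∀ i ∈ Finset.Icc 1 m, X ((i : ℤ) + c) ω ≤ u} := by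
  have : {ω | ∀ i ∈ Finset.Icc 1 m, X ((i : ℤ) + c) ω ≤ u}
      = ⋂ i ∈ (Finset.Icc 1 m : Finset ℕ), (X ((i : ℤ) + c)) ⁻¹' (Set.Iic u) := by
    ext ω; simp [Set.mem_iInter]
  rw [this]
  exact MeasurableSet.biInter (Set.to_countable _)
    (fun i _ => (hmeas _) measurableSet_Iic)

include hmeas hstat in
lemma mixing_chain (αseq : ℕ → ℝ)
    (hbnd : ∀ (n : ℕ) (j : ℤ) (A B : Set Ω),
      MeasurableSet[⨆ i ∈ {i : ℤ | i ≤ j}, MeasurableSpace.comap (X i) inferInstance] A →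
      MeasurableSet[⨆ i ∈ {i : ℤ | j + (n : ℤ) ≤ i},
        MeasurableSpace.comap (X i) inferInstance] B →
      |(P (A ∩ B)).toReal - (P A).toReal * (P B).toReal| ≤ αseq n)
    (u : ℝ) (b m L : ℕ) (hmb : m + L + 1 = b) (hm : 1 ≤ m) :
    ∀ K : ℕ, 1 ≤ K →
    ((P {ω | ∀ i ∈ Finset.Icc 1 m, X (i : ℤ) ω ≤ u}).toReal)^K
      ≤ (P (⋂ j ∈ Finset.Icc 1 K,
          {ω | ∀ i ∈ Finset.Icc 1 m, X ((i : ℤ) + ((j-1)*b : ℕ)) ω ≤ u})).toReal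
        + (K : ℝ) * αseq (L+1) := by
  -- abbreviations
  set s : ℝ := (P {ω | ∀ i ∈ Finset.Icc 1 m, X (i : ℤ) ω ≤ u}).toReal with hs
  have hempty : ∀ me : MeasurableSpace Ω, MeasurableSet[me] (∅ : Set Ω) :=
    fun me => @MeasurableSet.empty _ me
  have hαnn : 0 ≤ αseq (L+1) := by
    have := hbnd (L+1) 0 ∅ ∅ (hempty _) (hempty _)
    simpa using le_trans (abs_nonneg _) this
  have hs0 : 0 ≤ s := ENNReal.toReal_nonneg
  have hs1 : s ≤ 1 :=
    ENNReal.toReal_le_of_le_ofReal one_pos.le (by simpa using prob_le_one)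
  have hPblk : ∀ j : ℕ, (P {ω | ∀ i ∈ Finset.Icc 1 m,
      X ((i : ℤ) + ((j-1)*b : ℕ)) ω ≤ u}).toReal = s := by
    intro j
    rw [hs, shift_block hmeas hstat]
  intro K
  induction K with
  | zero => omega
  | succ K ih =>
    intro _
    rcases Nat.lt_or_ge 1 (K+1) with h1 | h1
    swap
    · -- K + 1 = 1
      have hK0 : K = 0 := by omega
      subst hK0
      have heq : (⋂ j ∈ Finset.Icc 1 1,
          {ω | ∀ i ∈ Finset.Icc 1 m, X ((i : ℤ) + ((j-1)*b : ℕ)) ω ≤ u})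
          = {ω | ∀ i ∈ Finset.Icc 1 m, X ((i : ℤ) + (((1-1)*b : ℕ) : ℤ)) ω ≤ u} := by
        simp
      rw [heq, hPblk 1, pow_one]
      push_cast
      linarith
    · -- K ≥ 1
      have hK1 : 1 ≤ K := by omega
      have ihK := ih hK1
      have hIcc : Finset.Icc 1 (K+1) = insert (K+1) (Finset.Icc 1 K) := by
        ext x; simp; omega
      set A : Set Ω := ⋂ j ∈ Finset.Icc 1 K,
          {ω | ∀ i ∈ Finset.Icc 1 m, X ((i : ℤ) + ((j-1)*b : ℕ)) ω ≤ u} with hA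
      set B : Set Ω := {ω | ∀ i ∈ Finset.Icc 1 m,
          X ((i : ℤ) + (((K+1)-1)*b : ℕ)) ω ≤ u} with hB
      have hsplit : (⋂ j ∈ Finset.Icc 1 (K+1),
          {ω | ∀ i ∈ Finset.Icc 1 m, X ((i : ℤ) + ((j-1)*b : ℕ)) ω ≤ u}) = A ∩ B := by
        rw [hIcc, Finset.set_biInter_insert, hA, hB, Set.inter_comm]
      -- measurability for mixing
      have hAmeas : MeasurableSet[⨆ i ∈ {i : ℤ | i ≤ (((K-1)*b + m : ℕ) : ℤ)},
          MeasurableSpace.comap (X i) inferInstance] A := by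
        rw [hA]
        refine MeasurableSet.biInter (Set.to_countable _) (fun j hj => ?_)
        have hj' : 1 ≤ j ∧ j ≤ K := by simpa using Finset.mem_coe.mp hj
        have heq : {ω | ∀ i ∈ Finset.Icc 1 m, X ((i : ℤ) + ((j-1)*b : ℕ)) ω ≤ u}
            = ⋂ i ∈ (Finset.Icc 1 m : Finset ℕ),
                (X ((i : ℤ) + ((j-1)*b : ℕ))) ⁻¹' (Set.Iic u) := by
          ext ω; simp [Set.mem_iInter]
        rw [heq]
        refine MeasurableSet.biInter (Set.to_countable _) (fun i hi => ?_)
        have hi' : 1 ≤ i ∧ i ≤ m := by simpa using Finset.mem_coe.mp hi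
        refine measSet_le X ?_ measurableSet_Iic
        have h1 : (j-1)*b ≤ (K-1)*b := Nat.mul_le_mul_right b (by omega)
        have hN : i + (j-1)*b ≤ (K-1)*b + m := by
          rw [Nat.add_comm ((K-1)*b) m]
          exact Nat.add_le_add hi'.2 h1
        exact_mod_cast hN
      have hBmeas : MeasurableSet[⨆ i ∈ {i : ℤ | (((K-1)*b + m : ℕ) : ℤ) + ((L+1 : ℕ) : ℤ) ≤ i},
          MeasurableSpace.comap (X i) inferInstance] B := by
        have heq : B = ⋂ i ∈ (Finset.Icc 1 m : Finset ℕ),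
            (X ((i : ℤ) + (((K+1)-1)*b : ℕ))) ⁻¹' (Set.Iic u) := by
          ext ω; simp [hB, Set.mem_iInter]
        rw [heq]
        refine MeasurableSet.biInter (Set.to_countable _) (fun i hi => ?_)
        have hi' : 1 ≤ i ∧ i ≤ m := by simpa using Finset.mem_coe.mp hi
        refine measSet_ge X ?_ measurableSet_Iic
        have hKm : K - 1 + 1 = K := Nat.succ_pred_eq_of_pos hK1
        have hKb : (K-1)*b + m + (L+1) = K*b := by
          have h2 : (K-1)*b + b = K*b := by
            calc (K-1)*b + b = ((K-1)+1)*b := by ring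
              _ = K*b := by rw [hKm]
          omega
        have hN : (K-1)*b + m + (L+1) ≤ i + ((K+1)-1)*b := by
          have : ((K+1)-1)*b = K*b := by norm_num
          omega
        exact_mod_cast hN
      have hmix := hbnd (L+1) (((K-1)*b + m : ℕ) : ℤ) A B hAmeas hBmeas
      have hABle : (P A).toReal * (P B).toReal ≤ (P (A ∩ B)).toReal + αseq (L+1) := by
        have := abs_le.mp hmix
        linarith [this.2]
      have hPB : (P B).toReal = s := hPblk (K+1)
      have hPA1 : (P A).toReal ≤ 1 :=
        ENNReal.toReal_le_of_le_ofReal one_pos.le (by simpa using prob_le_one)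
      have hPA0 : 0 ≤ (P A).toReal := ENNReal.toReal_nonneg
      calc s^(K+1) = s^K * s := by ring
        _ ≤ ((P A).toReal + (K : ℝ) * αseq (L+1)) * s := by
            apply mul_le_mul_of_nonneg_right _ hs0
            simpa [hA] using ihK
        _ = (P A).toReal * s + (K : ℝ) * αseq (L+1) * s := by ring
        _ ≤ (P A).toReal * (P B).toReal + (K : ℝ) * αseq (L+1) := by
            rw [hPB]
            have hKα : (0:ℝ) ≤ (K : ℝ) * αseq (L+1) :=
              mul_nonneg (Nat.cast_nonneg K) hαnn
            have := mul_le_of_le_one_right hKα hs1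
            linarith
        _ ≤ (P (A ∩ B)).toReal + αseq (L+1) + (K : ℝ) * αseq (L+1) := by linarith
        _ = (P (A ∩ B)).toReal + ((K+1 : ℕ) : ℝ) * αseq (L+1) := by push_cast; ring
        _ = _ := by rw [hsplit]

end chain


section cover
set_option linter.unusedSectionVars false
variable {Ω : Type*} [MeasurableSpace Ω] {P : Measure Ω} [IsProbabilityMeasure P]
variable {X : ℤ → Ω → ℝ}
variable (hmeas : ∀ i, Measurable (X i))
variable (hstat : ∀ h : ℤ, P.map (fun ω (i : ℤ) => X (i + h) ω) = P.map (fun ω (i : ℤ) => X i ω))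

include hmeas hstat in
lemma cover_bound (u : ℝ) (n b m L K : ℕ) (hbdef : b = n / K) (hmb : m + L + 1 = b)
    (hK : 1 ≤ K) :
    (P (⋂ j ∈ Finset.Icc 1 K,
        {ω | ∀ i ∈ Finset.Icc 1 m, X ((i : ℤ) + ((j-1)*b : ℕ)) ω ≤ u})).toReal
      ≤ (P {ω | ∀ i ∈ Finset.Icc 1 n, X (i : ℤ) ω ≤ u}).toReal
        + ((K*L + 2*K : ℕ) : ℝ) * (P {ω | u < X 1 ω}).toReal := by
  have hKb : K * b ≤ n := by
    rw [hbdef, mul_comm]; exact Nat.div_mul_le_self n K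
  have hrem : n - K * b ≤ K := by
    rw [hbdef]
    have h1 := Nat.div_add_mod n K
    have h2 := Nat.mod_lt n (show 0 < K by omega)
    omega
  set Gap : Finset ℕ := (Finset.Icc 1 K).biUnion
      (fun j => Finset.Icc ((j-1)*b + m + 1) (j*b)) with hGap
  set Tail : Finset ℕ := Finset.Icc (K*b+1) n with hTail
  have hcover : ∀ i : ℕ, 1 ≤ i → i ≤ n → i ∉ Gap → i ∉ Tail →
      ∃ j i', 1 ≤ j ∧ j ≤ K ∧ 1 ≤ i' ∧ i' ≤ m ∧ i = i' + (j-1)*b := by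
    intro i hi1 hin hGapn hTailn
    have hb1 : 1 ≤ b := by omega
    have hiKb : i ≤ K * b := by
      by_contra hc
      push_neg at hc
      refine hTailn ?_
      rw [hTail, Finset.mem_Icc]
      omega
    obtain ⟨d, rem, hrem2, hdm⟩ : ∃ d rem, rem < b ∧ i - 1 = b*d + rem :=
      ⟨(i-1)/b, (i-1)%b, Nat.mod_lt _ (by omega), (Nat.div_add_mod (i-1) b).symm⟩
    have hdK : d < K := by
      by_contra hc
      push_neg at hc
      have h3 : K*b ≤ b*d := by
        calc K*b = b*K := by ring
          _ ≤ b*d := Nat.mul_le_mul_left b hc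
      omega
    have hc1 : (d+1-1)*b = b*d := by simp [Nat.mul_comm]
    have hc2 : (d+1)*b = b*d + b := by ring
    rcases Nat.lt_or_ge (i - b*d) (m+1) with hsmall | hbig
    · exact ⟨d+1, i - b*d, by omega, by omega, by omega, by omega, by omega⟩
    · exfalso
      apply hGapn
      rw [hGap, Finset.mem_biUnion]
      refine ⟨d+1, ?_, ?_⟩
      · rw [Finset.mem_Icc]; omega
      · rw [Finset.mem_Icc]; omega
  -- event inclusion
  have hincl : (⋂ j ∈ Finset.Icc 1 K,
        {ω | ∀ i ∈ Finset.Icc 1 m, X ((i : ℤ) + ((j-1)*b : ℕ)) ω ≤ u})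
      ⊆ {ω | ∀ i ∈ Finset.Icc 1 n, X (i : ℤ) ω ≤ u}
        ∪ (⋃ i ∈ (Gap ∪ Tail : Finset ℕ), {ω | u < X (i : ℤ) ω}) := by
    intro ω hω
    by_cases hexc : ω ∈ ⋃ i ∈ (Gap ∪ Tail : Finset ℕ), {ω | u < X (i : ℤ) ω}
    · exact Or.inr hexc
    · left
      intro i hi
      have hi' : 1 ≤ i ∧ i ≤ n := by simpa using hi
      by_contra hx
      push_neg at hx
      have hiG : i ∉ Gap := by
        intro hmem
        exact hexc (Set.mem_biUnion
          (Finset.mem_coe.mpr (Finset.mem_union.mpr (Or.inl hmem))) hx)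
      have hiT : i ∉ Tail := by
        intro hmem
        exact hexc (Set.mem_biUnion
          (Finset.mem_coe.mpr (Finset.mem_union.mpr (Or.inr hmem))) hx)
      obtain ⟨j, i', hj1, hjK, hi'1, hi'm, hieq⟩ := hcover i hi'.1 hi'.2 hiG hiT
      have hωj : ω ∈ {ω | ∀ i ∈ Finset.Icc 1 m, X ((i : ℤ) + ((j-1)*b : ℕ)) ω ≤ u} := by
        have := Set.mem_iInter₂.mp hω j
        exact this (by rw [Finset.mem_Icc]; omega)
      have hle := hωj i' (by rw [Finset.mem_Icc]; omega)
      have hcast : ((i' : ℤ) + ((j-1)*b : ℕ)) = (i : ℤ) := by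
        rw [hieq]; push_cast; ring
      rw [hcast] at hle
      linarith
  -- cardinality
  have hcard : ((Gap ∪ Tail : Finset ℕ)).card ≤ K*L + 2*K := by
    have h1 : Gap.card ≤ K * (L + 1) := by
      rw [hGap]
      refine le_trans Finset.card_biUnion_le ?_
      have hb : ∀ j ∈ Finset.Icc 1 K, (Finset.Icc ((j-1)*b + m + 1) (j*b)).card ≤ L + 1 := by
        intro j hj
        have hj' : 1 ≤ j ∧ j ≤ K := by simpa using hj
        rw [Nat.card_Icc]
        have hjj : (j-1+1)*b = j*b := by congr 1; omega
        have hjj2 : (j-1+1)*b = (j-1)*b + b := by ring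
        omega
      calc ∑ j ∈ Finset.Icc 1 K, (Finset.Icc ((j-1)*b + m + 1) (j*b)).card
          ≤ ∑ _j ∈ Finset.Icc 1 K, (L+1) := Finset.sum_le_sum hb
        _ = K * (L+1) := by
            rw [Finset.sum_const, Nat.card_Icc, smul_eq_mul]
            norm_num
    have h2 : Tail.card ≤ K := by
      rw [hTail, Nat.card_Icc]; omega
    calc (Gap ∪ Tail).card ≤ Gap.card + Tail.card := Finset.card_union_le _ _
      _ ≤ K*(L+1) + K := by omega
      _ ≤ K*L + 2*K := by ring_nf; omega
  have hexc_bound : P (⋃ i ∈ (Gap ∪ Tail : Finset ℕ), {ω | u < X (i : ℤ) ω})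
      ≤ ((K*L + 2*K : ℕ) : ℝ≥0∞) * P {ω | u < X 1 ω} := by
    refine le_trans (measure_biUnion_finset_le _ _) ?_
    have heach : ∀ i ∈ (Gap ∪ Tail : Finset ℕ), P {ω | u < X (i : ℤ) ω} = P {ω | u < X 1 ω} :=
      fun i _ => shift_one hmeas hstat i u
    rw [Finset.sum_congr rfl heach, Finset.sum_const, nsmul_eq_mul]
    exact mul_le_mul_of_nonneg_right (Nat.cast_le.mpr hcard) (by positivity)
  have hfinal : P (⋂ j ∈ Finset.Icc 1 K,
        {ω | ∀ i ∈ Finset.Icc 1 m, X ((i : ℤ) + ((j-1)*b : ℕ)) ω ≤ u})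
      ≤ P {ω | ∀ i ∈ Finset.Icc 1 n, X (i : ℤ) ω ≤ u}
        + ((K*L + 2*K : ℕ) : ℝ≥0∞) * P {ω | u < X 1 ω} :=
    le_trans (measure_mono hincl) (le_trans (measure_union_le _ _)
      (add_le_add le_rfl hexc_bound))
  have hne1 : P {ω | ∀ i ∈ Finset.Icc 1 n, X (i : ℤ) ω ≤ u} ≠ ⊤ := measure_ne_top _ _
  have hne2 : ((K*L + 2*K : ℕ) : ℝ≥0∞) * P {ω | u < X 1 ω} ≠ ⊤ :=
    ENNReal.mul_ne_top (ENNReal.natCast_ne_top _) (measure_ne_top _ _)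
  calc (P _).toReal ≤ (P {ω | ∀ i ∈ Finset.Icc 1 n, X (i : ℤ) ω ≤ u}
        + ((K*L + 2*K : ℕ) : ℝ≥0∞) * P {ω | u < X 1 ω}).toReal :=
      ENNReal.toReal_mono (ENNReal.add_ne_top.mpr ⟨hne1, hne2⟩) hfinal
    _ = _ := by
      rw [ENNReal.toReal_add hne1 hne2, ENNReal.toReal_mul, ENNReal.toReal_natCast]

end cover


section bonf
set_option linter.unusedSectionVars false
variable {Ω : Type*} [MeasurableSpace Ω] {P : Measure Ω} [IsProbabilityMeasure P]
variable {X : ℤ → Ω → ℝ}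
variable (hmeas : ∀ i, Measurable (X i))
variable (hstat : ∀ h : ℤ, P.map (fun ω (i : ℤ) => X (i + h) ω) = P.map (fun ω (i : ℤ) => X i ω))

lemma toReal_biUnion_le {ι : Type*} (F : Finset ι) (S : ι → Set Ω) :
    (P (⋃ i ∈ F, S i)).toReal ≤ ∑ i ∈ F, (P (S i)).toReal := by
  have h := measure_biUnion_finset_le (μ := P) F S
  have hne : (∑ i ∈ F, P (S i)) ≠ ⊤ :=
    (ENNReal.sum_lt_top.mpr (fun i _ => measure_lt_top _ _)).ne
  calc (P (⋃ i ∈ F, S i)).toReal ≤ (∑ i ∈ F, P (S i)).toReal := ENNReal.toReal_mono hne h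
    _ = ∑ i ∈ F, (P (S i)).toReal := ENNReal.toReal_sum (fun i _ => measure_ne_top _ _)

include hmeas hstat in
lemma bonferroni (u : ℝ) (m k0 : ℕ) (hk0 : 1 ≤ k0) (hkm : k0 + 1 ≤ m) :
    ((m : ℝ) - (k0 : ℝ)) * (P ({ω | u < X (k0 : ℤ) ω} ∩ {ω | u < X 0 ω})).toReal
      ≤ (m : ℝ) * (P {ω | u < X 1 ω}).toReal
        - (1 - (P {ω | ∀ i ∈ Finset.Icc 1 m, X (i : ℤ) ω ≤ u}).toReal) := by
  set A : ℕ → Set Ω := fun i => {ω | u < X (i : ℤ) ω} with hA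
  set p' : ℝ := (P {ω | u < X 1 ω}).toReal with hp'
  set q : ℝ := (P ({ω | u < X (k0 : ℤ) ω} ∩ {ω | u < X 0 ω})).toReal with hq
  have hAmeas : ∀ i : ℕ, MeasurableSet (A i) :=
    fun i => measurableSet_lt measurable_const (hmeas _)
  have hsingle : ∀ i : ℕ, (P (A i)).toReal = p' := by
    intro i
    rw [hA, hp', shift_one hmeas hstat]
  have hpair : ∀ i : ℕ, (P (A (i + k0) ∩ A i)).toReal = q := by
    intro i
    simp only [hA, hq]
    rw [show ((i + k0 : ℕ) : ℤ) = (k0 : ℤ) + (i : ℤ) by push_cast; ring]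
    rw [shift_pair hmeas hstat (k0 : ℤ) (i : ℤ) u u]
  have hdiff : ∀ i : ℕ, (P (A i \ A (i + k0))).toReal = p' - q := by
    intro i
    have h1 : P (A i ∩ A (i + k0)) + P (A i \ A (i + k0)) = P (A i) :=
      measure_inter_add_diff _ (hAmeas _)
    have h2 : (P (A i ∩ A (i + k0))).toReal + (P (A i \ A (i + k0))).toReal
        = (P (A i)).toReal := by
      rw [← ENNReal.toReal_add (measure_ne_top _ _) (measure_ne_top _ _), h1]
    rw [Set.inter_comm] at h2
    rw [hpair i, hsingle i] at h2
    linarith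
  set U : Set Ω := ⋃ i ∈ Finset.Icc 1 m, A i with hU
  have hUmeas : MeasurableSet U :=
    MeasurableSet.biUnion (Set.to_countable _) (fun i _ => hAmeas i)
  have hcompl : {ω | ∀ i ∈ Finset.Icc 1 m, X (i : ℤ) ω ≤ u} = Uᶜ := by
    ext ω
    simp [hU, hA, not_lt]
  have hPU : (P U).toReal
      = 1 - (P {ω | ∀ i ∈ Finset.Icc 1 m, X (i : ℤ) ω ≤ u}).toReal := by
    rw [hcompl]
    have h1 : P U + P Uᶜ = 1 := by
      rw [measure_add_measure_compl hUmeas]; exact measure_univ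
    have h2 : (P U).toReal + (P Uᶜ).toReal = 1 := by
      rw [← ENNReal.toReal_add (measure_ne_top _ _) (measure_ne_top _ _), h1]
      simp
    linarith
  have hincl : U ⊆ (⋃ i ∈ Finset.Icc 1 (m - k0), (A i \ A (i + k0)))
      ∪ (⋃ i ∈ Finset.Icc (m - k0 + 1) m, A i) := by
    intro ω hω
    rw [hU] at hω
    obtain ⟨i0, hi0, hx0⟩ := Set.mem_iUnion₂.mp hω
    obtain ⟨ist, histT, hmax⟩ := Finset.exists_max_image
      ((Finset.Icc 1 m).filter (fun i : ℕ => u < X ((i : ℕ) : ℤ) ω)) id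
      ⟨i0, Finset.mem_filter.mpr ⟨by simpa using hi0, hx0⟩⟩
    rw [Finset.mem_filter, Finset.mem_Icc] at histT
    rcases Nat.lt_or_ge (m - k0) ist with hbig | hsmall
    · exact Set.mem_union_right _ (Set.mem_iUnion₂.mpr
        ⟨ist, Finset.mem_Icc.mpr ⟨by omega, by omega⟩, histT.2⟩)
    · refine Set.mem_union_left _ (Set.mem_iUnion₂.mpr
        ⟨ist, Finset.mem_Icc.mpr ⟨by omega, by omega⟩, histT.2, ?_⟩)
      intro hc
      have hc' : u < X ((ist + k0 : ℕ) : ℤ) ω := hc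
      have hmem2 : ist + k0 ∈ (Finset.Icc 1 m).filter (fun i : ℕ => u < X ((i : ℕ) : ℤ) ω) := by
        rw [Finset.mem_filter, Finset.mem_Icc]
        exact ⟨⟨by omega, by omega⟩, hc'⟩
      have := hmax _ hmem2
      simp only [id] at this
      omega
  have hcard1 : (Finset.Icc 1 (m - k0)).card = m - k0 := by rw [Nat.card_Icc]; omega
  have hcard2 : (Finset.Icc (m - k0 + 1) m).card = k0 := by rw [Nat.card_Icc]; omega
  have hbound : (P U).toReal ≤ ((m - k0 : ℕ) : ℝ) * (p' - q) + (k0 : ℝ) * p' := by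
    have h1 : (P U).toReal ≤ (P ((⋃ i ∈ Finset.Icc 1 (m - k0), (A i \ A (i + k0)))
        ∪ (⋃ i ∈ Finset.Icc (m - k0 + 1) m, A i))).toReal :=
      ENNReal.toReal_mono (measure_ne_top _ _) (measure_mono hincl)
    have h2 : (P ((⋃ i ∈ Finset.Icc 1 (m - k0), (A i \ A (i + k0)))
        ∪ (⋃ i ∈ Finset.Icc (m - k0 + 1) m, A i))).toReal
        ≤ (P (⋃ i ∈ Finset.Icc 1 (m - k0), (A i \ A (i + k0)))).toReal
          + (P (⋃ i ∈ Finset.Icc (m - k0 + 1) m, A i)).toReal := by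
      have hle := measure_union_le (μ := P) (⋃ i ∈ Finset.Icc 1 (m - k0), (A i \ A (i + k0)))
        (⋃ i ∈ Finset.Icc (m - k0 + 1) m, A i)
      calc _ ≤ ((P (⋃ i ∈ Finset.Icc 1 (m - k0), (A i \ A (i + k0))))
          + (P (⋃ i ∈ Finset.Icc (m - k0 + 1) m, A i))).toReal :=
          ENNReal.toReal_mono
            (ENNReal.add_ne_top.mpr ⟨measure_ne_top _ _, measure_ne_top _ _⟩) hle
        _ = _ := ENNReal.toReal_add (measure_ne_top _ _) (measure_ne_top _ _)
    have h3 : (P (⋃ i ∈ Finset.Icc 1 (m - k0), (A i \ A (i + k0)))).toReal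
        ≤ ((m - k0 : ℕ) : ℝ) * (p' - q) := by
      refine le_trans (toReal_biUnion_le _ _) ?_
      rw [Finset.sum_congr rfl (fun i _ => hdiff i), Finset.sum_const, hcard1, nsmul_eq_mul]
    have h4 : (P (⋃ i ∈ Finset.Icc (m - k0 + 1) m, A i)).toReal ≤ (k0 : ℝ) * p' := by
      refine le_trans (toReal_biUnion_le _ _) ?_
      rw [Finset.sum_congr rfl (fun i _ => hsingle i), Finset.sum_const, hcard2, nsmul_eq_mul]
    linarith
  have hcast : ((m - k0 : ℕ) : ℝ) = (m : ℝ) - (k0 : ℝ) :=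
    Nat.cast_sub (by omega : k0 ≤ m)
  rw [hcast] at hbound
  rw [hPU] at hbound
  nlinarith [hbound]

end bonf

set_option maxHeartbeats 2000000 in
/-- Proposition 2.2(ii): for a strictly stationary, strongly mixing sequence of
nonnegative regularly varying random variables with extremal index `θ = 1`, for every
integer `k ≠ 0` and every `r ∈ (0,1)`, `P(X_k > r aₙ | X_0 > aₙ) → 0`; i.e. the tail
process `(Y_k)` satisfies `Y_k = 0` a.s. for `k ≠ 0`. -/
theorem tail_process_vanishes
    {Ω : Type*} [MeasurableSpace Ω] (P : Measure Ω) [IsProbabilityMeasure P]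
    (X : ℤ → Ω → ℝ) (hmeas : ∀ i, Measurable (X i)) (hpos : ∀ i ω, 0 ≤ X i ω)
    (hstat : StrictStationaryZ P X) (hmix : StrongMixingZ P X)
    (α : ℝ) (hα : 0 < α) (hrv : RegularlyVaryingRV P (X 1) α)
    (a : ℕ → ℝ) (hapos : ∀ n, 0 < a n)
    (han : Tendsto (fun n : ℕ => (n : ℝ) * (P {ω | a n < X 1 ω}).toReal) atTop (𝓝 1))
    (hei : ∀ u : ℝ, 0 < u →
      Tendsto (fun n : ℕ =>
          (P {ω | ∀ i ∈ Finset.Icc 1 n, X (i : ℤ) ω ≤ u * a n}).toReal)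
        atTop (𝓝 (Real.exp (-u ^ (-α))))) :
    ∀ k : ℤ, k ≠ 0 → ∀ r : ℝ, 0 < r → r < 1 →
      Tendsto (fun n : ℕ =>
        (P ({ω | r * a n < X k ω} ∩ {ω | a n < X 0 ω})).toReal /
          (P {ω | a n < X 0 ω}).toReal)
        atTop (𝓝 0) := by
  intro k hk r hr0 hr1
  obtain ⟨αseq, hα0, hbnd⟩ := hmix
  have hαnn : ∀ nn, 0 ≤ αseq nn := by
    intro nn
    have hempty : ∀ me : MeasurableSpace Ω, MeasurableSet[me] (∅ : Set Ω) :=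
      fun me => @MeasurableSet.empty _ me
    have := hbnd nn 0 ∅ ∅ (hempty _) (hempty _)
    simpa using le_trans (abs_nonneg _) this
  set c : ℝ := r ^ (-α) with hcdef
  have hc : 0 < c := Real.rpow_pos_of_pos hr0 _
  set k0 : ℕ := k.natAbs with hk0def
  have hk01 : 1 ≤ k0 := by rw [hk0def]; omega
  set p : ℕ → ℝ := fun n => (P {ω | a n < X 1 ω}).toReal with hpdef
  set p' : ℕ → ℝ := fun n => (P {ω | r * a n < X 1 ω}).toReal with hp'def
  set t : ℕ → ℝ := fun n =>
    (P {ω | ∀ i ∈ Finset.Icc 1 n, X (i : ℤ) ω ≤ r * a n}).toReal with htdef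
  set q' : ℕ → ℝ := fun n =>
    (P ({ω | r * a n < X (k0 : ℤ) ω} ∩ {ω | r * a n < X 0 ω})).toReal with hq'def
  have hppos : ∀ n, 0 < p n := fun n =>
    ENNReal.toReal_pos (hrv.1 (a n) (hapos n)).ne' (measure_ne_top _ _)
  have hp'pos : ∀ n, 0 < p' n := fun n =>
    ENNReal.toReal_pos (hrv.1 (r * a n) (mul_pos hr0 (hapos n))).ne' (measure_ne_top _ _)
  have hT : Tendsto t atTop (𝓝 (Real.exp (-c))) := hei r hr0
  have hinv : Tendsto (fun n : ℕ => 1/(n : ℝ)) atTop (𝓝 0) :=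
    tendsto_one_div_atTop_nhds_zero_nat
  have hp0 : Tendsto p atTop (𝓝 0) := by
    have h1 : Tendsto (fun n : ℕ => ((n : ℝ) * p n) * (1/(n : ℝ))) atTop (𝓝 (1 * 0)) :=
      han.mul hinv
    rw [one_mul] at h1
    refine h1.congr' ?_
    filter_upwards [eventually_ge_atTop 1] with n hn
    have hne : (n : ℝ) ≠ 0 := (Nat.cast_pos.mpr hn).ne'
    field_simp
  have hatop : Tendsto a atTop atTop := by
    rw [tendsto_atTop]
    intro M
    have hM'pos : (0:ℝ) < max M 1 := lt_of_lt_of_le one_pos (le_max_right _ _)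
    have hM' : 0 < (P {ω | max M 1 < X 1 ω}).toReal :=
      ENNReal.toReal_pos (hrv.1 _ hM'pos).ne' (measure_ne_top _ _)
    filter_upwards [hp0.eventually_lt_const hM'] with n hn
    by_contra hc2
    push_neg at hc2
    have hsub : {ω | max M 1 < X 1 ω} ⊆ {ω | a n < X 1 ω} := by
      intro ω hω
      exact lt_trans (lt_of_lt_of_le hc2 (le_max_left _ _)) hω
    have hle : (P {ω | max M 1 < X 1 ω}).toReal ≤ p n :=
      ENNReal.toReal_mono (measure_ne_top _ _) (measure_mono hsub)
    linarith
  have hratio : Tendsto (fun n => p' n / p n) atTop (𝓝 c) := (hrv.2 r hr0).comp hatop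
  have hnp' : Tendsto (fun n : ℕ => (n : ℝ) * p' n) atTop (𝓝 c) := by
    have h1 := han.mul hratio
    rw [one_mul] at h1
    refine h1.congr ?_
    intro n
    have hpne : p n ≠ 0 := (hppos n).ne'
    field_simp
    ring
  have hp'0 : Tendsto p' atTop (𝓝 0) := by
    have h1 : Tendsto (fun n : ℕ => ((n : ℝ) * p' n) * (1/(n : ℝ))) atTop (𝓝 (c * 0)) :=
      hnp'.mul hinv
    rw [mul_zero] at h1
    refine h1.congr' ?_
    filter_upwards [eventually_ge_atTop 1] with n hn
    have hne : (n : ℝ) ≠ 0 := (Nat.cast_pos.mpr hn).ne'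
    field_simp
  -- the key eventual bound on q'/p'
  have hkey : ∀ ε : ℝ, 0 < ε → ∀ᶠ n in atTop, q' n / p' n < ε := by
    intro ε hε
    -- choose the number of blocks K
    set K : ℕ := ⌈4*c/ε⌉₊ + 1 with hKdef
    have hK1 : 1 ≤ K := by omega
    have hKpos : (0:ℝ) < (K : ℝ) := Nat.cast_pos.mpr (by omega)
    have hcK : c / (K : ℝ) < ε/4 := by
      have h1 : 4*c/ε < (K : ℝ) := by
        refine lt_of_le_of_lt (Nat.le_ceil _) ?_
        exact_mod_cast Nat.lt_succ_self _
      rw [div_lt_div_iff₀ hKpos (by norm_num : (0:ℝ) < 4)]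
      have h2 : 4*c/ε*ε = 4*c := div_mul_cancel₀ _ hε.ne'
      nlinarith [mul_lt_mul_of_pos_right h1 hε]
    set g : ℝ → ℝ := fun x => ((K : ℝ)/c) * (1 - (Real.exp (-c) + x) ^ ((K : ℝ)⁻¹))
      with hgdef
    have hg0 : 1 - ε/2 < g 0 := by
      have hEpow : (Real.exp (-c)) ^ ((K : ℝ)⁻¹) = Real.exp (-(c/(K : ℝ))) := by
        rw [← Real.exp_mul]
        congr 1
        field_simp
      have hx : 0 < c / (K : ℝ) := div_pos hc hKpos
      set x : ℝ := c / (K : ℝ) with hxdef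
      have hexp : Real.exp (-x) ≤ (1+x)⁻¹ := by
        rw [Real.exp_neg]
        exact inv_anti₀ (by linarith) (by linarith [Real.add_one_le_exp x])
      have hgeq : g 0 = x⁻¹ * (1 - Real.exp (-x)) := by
        rw [hgdef]
        simp only [add_zero]
        rw [hEpow, hxdef]
        rw [show ((K:ℝ)/c) = (c/(K:ℝ))⁻¹ by rw [inv_div]]
      have h3 : x⁻¹ * (1 - Real.exp (-x)) ≥ (1+x)⁻¹ := by
        have h4 : 1 - Real.exp (-x) ≥ 1 - (1+x)⁻¹ := by linarith
        have h5 : (1:ℝ) - (1+x)⁻¹ = x/(1+x) := by field_simp; ring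
        rw [h5] at h4
        calc x⁻¹ * (1 - Real.exp (-x)) ≥ x⁻¹ * (x/(1+x)) := by
              apply mul_le_mul_of_nonneg_left h4 (by positivity)
          _ = (1+x)⁻¹ := by field_simp
      have hxs : x < ε/4 := hcK
      have hy : (1+x)⁻¹ * (1+x) = 1 := inv_mul_cancel₀ (by positivity)
      have hypos : (0:ℝ) < (1+x)⁻¹ := by positivity
      have h7 : (1 - ε/2) * (1+x) < 1 := by nlinarith
      rw [hgeq]
      nlinarith [h3, h7, hy, hypos]
    -- continuity of g at 0
    have hgcont : Tendsto g (𝓝 0) (𝓝 (g 0)) := by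
      have h1 : ContinuousAt (fun x : ℝ => Real.exp (-c) + x) 0 :=
        (continuous_const.add continuous_id).continuousAt
      have h2 : ContinuousAt (fun y : ℝ => y ^ ((K : ℝ)⁻¹)) (Real.exp (-c) + 0) :=
        Real.continuousAt_rpow_const _ _ (Or.inl (by positivity))
      exact (continuousAt_const.mul (continuousAt_const.sub (h2.comp h1)))
    obtain ⟨η, hη, hball⟩ :=
      Metric.eventually_nhds_iff.mp (hgcont.eventually (eventually_gt_nhds hg0))
    obtain ⟨N, hN⟩ := (Metric.tendsto_atTop.mp hα0) (η/(K : ℝ)) (by positivity)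
    set L : ℕ := N with hLdef
    set x₀ : ℝ := (K : ℝ) * αseq (L+1) with hx₀def
    have hx₀nn : 0 ≤ x₀ := mul_nonneg hKpos.le (hαnn _)
    have hx₀η : x₀ < η := by
      have h1 := hN (L+1) (by omega)
      rw [Real.dist_eq, sub_zero] at h1
      have habs : αseq (L+1) < η/(K : ℝ) := lt_of_abs_lt h1
      calc x₀ = (K : ℝ) * αseq (L+1) := rfl
        _ < (K : ℝ) * (η/(K : ℝ)) := by exact mul_lt_mul_of_pos_left habs hKpos
        _ = η := by field_simp
    have hgx₀ : 1 - ε/2 < g x₀ := by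
      refine hball ?_
      rw [Real.dist_eq, sub_zero, abs_of_nonneg hx₀nn]
      exact hx₀η
    -- block structure
    set b : ℕ → ℕ := fun n => n / K with hbdef
    set m : ℕ → ℕ := fun n => b n - L - 1 with hmdef
    set s : ℕ → ℝ := fun n =>
      (P {ω | ∀ i ∈ Finset.Icc 1 (m n), X (i : ℤ) ω ≤ r * a n}).toReal with hsdef
    set δ : ℕ → ℝ := fun n => x₀ + ((K*L + 2*K : ℕ) : ℝ) * p' n with hδdef
    have hbev : ∀ x : ℕ, ∀ᶠ n in atTop, x ≤ b n := by
      intro x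
      filter_upwards [eventually_ge_atTop (K*x)] with n hn
      have hx2 : x ≤ n / K := by
        rw [Nat.le_div_iff_mul_le (by omega : 0 < K)]
        rw [mul_comm]
        exact hn
      exact hx2
    have hmtop : Tendsto m atTop atTop := by
      rw [tendsto_atTop_atTop]
      intro x
      refine ⟨K*(x + L + 1), fun n hn => ?_⟩
      have hbge : x + L + 1 ≤ b n := by
        rw [hbdef]
        simp only
        rw [Nat.le_div_iff_mul_le (by omega : 0 < K)]
        calc (x+L+1)*K = K*(x+L+1) := by ring
          _ ≤ n := hn
      have hmn : m n = b n - L - 1 := rfl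
      omega
    -- m n / n → 1/K
    have hlower : Tendsto (fun n : ℕ => 1/(K : ℝ) - ((L : ℝ)+2)/(n : ℝ)) atTop
        (𝓝 (1/(K : ℝ))) := by
      have h1 : Tendsto (fun n : ℕ => ((L : ℝ)+2)/(n : ℝ)) atTop (𝓝 0) :=
        tendsto_const_nhds.div_atTop tendsto_natCast_atTop_atTop
      simpa using tendsto_const_nhds.sub h1
    have hmdiv : Tendsto (fun n : ℕ => (m n : ℝ)/(n : ℝ)) atTop (𝓝 (1/(K : ℝ))) := by
      refine tendsto_of_tendsto_of_tendsto_of_le_of_le' hlower tendsto_const_nhds ?_ ?_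
      · filter_upwards [eventually_ge_atTop 1] with n hn
        have hnpos : (0:ℝ) < (n : ℝ) := Nat.cast_pos.mpr hn
        have h2 : n < K * (b n) + K := by
          have hdm := Nat.div_add_mod n K
          have hml := Nat.mod_lt n (show 0 < K by omega)
          show n < K * (n / K) + K
          omega
        have h2' : (n : ℝ) < (K : ℝ) * (b n : ℝ) + (K : ℝ) := by exact_mod_cast h2
        have hb_real : (n : ℝ)/(K : ℝ) - 1 ≤ (b n : ℝ) := by
          rw [sub_le_iff_le_add, div_le_iff₀ hKpos]
          nlinarith
        have h3 : b n ≤ m n + L + 1 := by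
          have hmn : m n = b n - L - 1 := rfl
          omega
        have h3' : (b n : ℝ) ≤ (m n : ℝ) + (L : ℝ) + 1 := by exact_mod_cast h3
        rw [le_div_iff₀ hnpos]
        have hexpand : (1/(K : ℝ) - ((L : ℝ)+2)/(n : ℝ)) * (n : ℝ)
            = (n : ℝ)/(K : ℝ) - ((L : ℝ)+2) := by
          field_simp
        rw [hexpand]
        linarith
      · filter_upwards [eventually_ge_atTop 1] with n hn
        have hnpos : (0:ℝ) < (n : ℝ) := Nat.cast_pos.mpr hn
        have h2 : K * (m n) ≤ n := by
          have hmb : m n ≤ b n := by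
            have hmn : m n = b n - L - 1 := rfl
            omega
          calc K * m n ≤ K * b n := Nat.mul_le_mul_left K hmb
            _ = (n/K) * K := by rw [mul_comm]
            _ ≤ n := Nat.div_mul_le_self n K
        have h2' : (K : ℝ) * (m n : ℝ) ≤ (n : ℝ) := by exact_mod_cast h2
        rw [div_le_div_iff₀ hnpos hKpos]
        linarith
    have hmp' : Tendsto (fun n : ℕ => (m n : ℝ) * p' n) atTop (𝓝 (c/(K : ℝ))) := by
      have h1 := hmdiv.mul hnp'
      have h2 : (1/(K : ℝ))*c = c/(K : ℝ) := by ring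
      rw [h2] at h1
      refine h1.congr' ?_
      filter_upwards [eventually_ge_atTop 1] with n hn
      have hne : (n : ℝ) ≠ 0 := (Nat.cast_pos.mpr hn).ne'
      rw [div_mul_eq_mul_div, mul_comm ((n:ℝ)) (p' n), ← mul_assoc, mul_div_assoc,
        div_self hne, mul_one]
    -- W
    set W : ℕ → ℝ := fun n => (t n + δ n) ^ ((K : ℝ)⁻¹) with hWdef
    have hδlim : Tendsto δ atTop (𝓝 x₀) := by
      have h1 := hp'0.const_mul ((K*L + 2*K : ℕ) : ℝ)
      rw [mul_zero] at h1
      have h2 := (tendsto_const_nhds (x := x₀) (f := atTop (α := ℕ))).add h1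
      rw [add_zero] at h2
      exact h2
    have htδ : Tendsto (fun n => t n + δ n) atTop (𝓝 (Real.exp (-c) + x₀)) :=
      hT.add hδlim
    have hWlim : Tendsto W atTop (𝓝 ((Real.exp (-c) + x₀) ^ ((K : ℝ)⁻¹))) := by
      have hcont : ContinuousAt (fun y : ℝ => y ^ ((K : ℝ)⁻¹)) (Real.exp (-c) + x₀) :=
        Real.continuousAt_rpow_const _ _ (Or.inl (by positivity))
      exact hcont.tendsto.comp htδ
    -- fraction m/(m-k0) → 1
    have hmRtop : Tendsto (fun n : ℕ => (m n : ℝ)) atTop atTop :=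
      tendsto_natCast_atTop_atTop.comp hmtop
    have hk0m : Tendsto (fun n : ℕ => (k0 : ℝ)/(m n : ℝ)) atTop (𝓝 0) :=
      tendsto_const_nhds.div_atTop hmRtop
    have hfrac : Tendsto (fun n : ℕ => (m n : ℝ)/((m n : ℝ) - (k0 : ℝ))) atTop (𝓝 1) := by
      have h2 : Tendsto (fun n : ℕ => 1 - (k0 : ℝ)/(m n : ℝ)) atTop (𝓝 1) := by
        simpa using tendsto_const_nhds.sub hk0m
      have h1 : Tendsto (fun n : ℕ => (1 - (k0 : ℝ)/(m n : ℝ))⁻¹) atTop (𝓝 1) := by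
        simpa using h2.inv₀ (by norm_num)
      refine h1.congr' ?_
      filter_upwards [hmtop.eventually_ge_atTop (k0+1)] with n hn
      have hmpos : (0:ℝ) < (m n : ℝ) := Nat.cast_pos.mpr (by omega)
      have hmk : (k0 : ℝ) + 1 ≤ (m n : ℝ) := by exact_mod_cast hn
      rw [show (1 : ℝ) - (k0 : ℝ)/(m n : ℝ) = ((m n : ℝ) - (k0 : ℝ))/(m n : ℝ) by
        field_simp]
      rw [inv_div]
    set R : ℕ → ℝ := fun n =>
      ((m n : ℝ)/((m n : ℝ) - (k0 : ℝ))) * (1 - (1 - W n)/((m n : ℝ) * p' n)) with hRdef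
    have hRlim : Tendsto R atTop (𝓝 (1 * (1 -
        (1 - (Real.exp (-c) + x₀) ^ ((K : ℝ)⁻¹)) / (c/(K : ℝ))))) := by
      refine hfrac.mul ?_
      exact tendsto_const_nhds.sub ((tendsto_const_nhds.sub hWlim).div hmp'
        (div_pos hc hKpos).ne')
    have hlimval : 1 * (1 - (1 - (Real.exp (-c) + x₀) ^ ((K : ℝ)⁻¹)) / (c/(K : ℝ))) < ε := by
      have hGeq : (1 - (Real.exp (-c) + x₀) ^ ((K : ℝ)⁻¹)) / (c/(K : ℝ)) = g x₀ := by
        rw [hgdef]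
        simp only
        field_simp
      rw [one_mul, hGeq]
      linarith
    have hRev : ∀ᶠ n in atTop, R n < ε := hRlim.eventually_lt_const hlimval
    -- the eventual inequality q'/p' ≤ R
    have hEvIneq : ∀ᶠ n in atTop, q' n / p' n ≤ R n := by
      filter_upwards [hmtop.eventually_ge_atTop (k0+1), hbev (L+2),
        eventually_ge_atTop 1] with n hmn hbn hn1
      have hp'n := hp'pos n
      have hmbn : m n + L + 1 = b n := by
        have hmn' : m n = b n - L - 1 := rfl
        omega
      have hm1 : 1 ≤ m n := by omega
      have h1 := mixing_chain hmeas hstat αseq hbnd (r * a n) (b n) (m n) L hmbn hm1 K hK1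
      have h2 := cover_bound hmeas hstat (r * a n) n (b n) (m n) L K rfl hmbn hK1
      have h3 : s n ^ K ≤ t n + δ n := by
        have e1 : s n = (P {ω | ∀ i ∈ Finset.Icc 1 (m n), X (i : ℤ) ω ≤ r * a n}).toReal :=
          rfl
        have e2 : t n = (P {ω | ∀ i ∈ Finset.Icc 1 n, X (i : ℤ) ω ≤ r * a n}).toReal := rfl
        have e3 : p' n = (P {ω | r * a n < X 1 ω}).toReal := rfl
        rw [e1]
        calc (P {ω | ∀ i ∈ Finset.Icc 1 (m n), X (i : ℤ) ω ≤ r * a n}).toReal ^ K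
            ≤ (P (⋂ j ∈ Finset.Icc 1 K, {ω | ∀ i ∈ Finset.Icc 1 (m n),
                X ((i : ℤ) + ((j-1)*(b n) : ℕ)) ω ≤ r * a n})).toReal
              + (K : ℝ) * αseq (L+1) := h1
          _ ≤ ((P {ω | ∀ i ∈ Finset.Icc 1 n, X (i : ℤ) ω ≤ r * a n}).toReal
              + ((K*L + 2*K : ℕ) : ℝ) * (P {ω | r * a n < X 1 ω}).toReal)
              + (K : ℝ) * αseq (L+1) := by linarith
          _ = t n + δ n := by rw [← e2, ← e3, hδdef]; simp only; rw [hx₀def]; ring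
      have h4 := bonferroni hmeas hstat (r * a n) (m n) k0 hk01 hmn
      have hsnn : 0 ≤ s n := ENNReal.toReal_nonneg
      have htδnn : 0 ≤ t n + δ n := by
        have : 0 ≤ t n := ENNReal.toReal_nonneg
        have : 0 ≤ δ n := by
          rw [hδdef]
          have := hp'pos n
          positivity
        positivity
      have h5 : s n ≤ W n := by
        have hKne : ((K : ℕ) : ℝ) ≠ 0 := hKpos.ne'
        calc s n = (s n ^ K) ^ ((K : ℝ)⁻¹) := by
              rw [← Real.rpow_natCast (s n) K, ← Real.rpow_mul hsnn,
                mul_inv_cancel₀ hKne, Real.rpow_one]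
          _ ≤ (t n + δ n) ^ ((K : ℝ)⁻¹) := Real.rpow_le_rpow (by positivity) h3 (by positivity)
      have hmk0 : (0:ℝ) < (m n : ℝ) - (k0 : ℝ) := by
        have : (k0 : ℝ) + 1 ≤ (m n : ℝ) := by exact_mod_cast hmn
        linarith
      have h6 : ((m n : ℝ) - (k0 : ℝ)) * q' n ≤ (m n : ℝ) * p' n - (1 - W n) := by
        have e4 : q' n = (P ({ω | r * a n < X (k0 : ℤ) ω}
            ∩ {ω | r * a n < X 0 ω})).toReal := rfl
        have e5 : s n = (P {ω | ∀ i ∈ Finset.Icc 1 (m n), X (i : ℤ) ω ≤ r * a n}).toReal :=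
          rfl
        rw [e4]
        have h4' := h4
        rw [← e5] at h4'
        have e3 : p' n = (P {ω | r * a n < X 1 ω}).toReal := rfl
        rw [← e3] at h4'
        linarith
      have h7 : q' n ≤ ((m n : ℝ) * p' n - (1 - W n))/((m n : ℝ) - (k0 : ℝ)) := by
        rw [le_div_iff₀ hmk0]
        nlinarith [h6]
      have h8 : q' n / p' n ≤ (((m n : ℝ) * p' n - (1 - W n))/((m n : ℝ) - (k0 : ℝ))) / p' n :=
        (div_le_div_iff_of_pos_right hp'n).mpr h7
      have h9 : (((m n : ℝ) * p' n - (1 - W n))/((m n : ℝ) - (k0 : ℝ))) / p' n = R n := by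
        rw [hRdef]
        simp only
        have hmne : (m n : ℝ) ≠ 0 := (Nat.cast_pos.mpr (by omega : 0 < m n)).ne'
        field_simp
      rw [h9] at h8
      exact h8
    filter_upwards [hEvIneq, hRev] with n ha hb
    exact lt_of_le_of_lt ha hb
  -- conclude
  have hq'p' : Tendsto (fun n => q' n / p' n) atTop (𝓝 0) := by
    rw [tendsto_order]
    constructor
    · intro x hx
      filter_upwards with n
      exact lt_of_lt_of_le hx (div_nonneg ENNReal.toReal_nonneg (hp'pos n).le)
    · intro x hx
      exact hkey x hx
  have hq'p : Tendsto (fun n => q' n / p n) atTop (𝓝 0) := by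
    have h1 := hq'p'.mul hratio
    rw [zero_mul] at h1
    refine h1.congr ?_
    intro n
    have h2 : p' n ≠ 0 := (hp'pos n).ne'
    have h3 : p n ≠ 0 := (hppos n).ne'
    rw [div_mul_div_comm, mul_comm (q' n) (p' n), mul_div_mul_left _ _ h2]
  have hqle : ∀ n, (P ({ω | r * a n < X k ω} ∩ {ω | a n < X 0 ω})).toReal ≤ q' n := by
    intro n
    have hra : r * a n < a n := by nlinarith [hapos n]
    rcases lt_or_gt_of_ne hk with hneg | hpos'
    · -- k < 0
      have hkk : (k0 : ℤ) = -k := by rw [hk0def]; omega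
      have heq := shift_pair hmeas hstat k (-k) (r * a n) (a n)
      rw [show k + -k = 0 by ring] at heq
      have heq' : P ({ω | r * a n < X k ω} ∩ {ω | a n < X 0 ω})
          = P ({ω | r * a n < X 0 ω} ∩ {ω | a n < X (-k) ω}) := heq.symm
      rw [hq'def]
      simp only
      have hsub : ({ω | r * a n < X 0 ω} ∩ {ω | a n < X (-k) ω})
          ⊆ ({ω | r * a n < X (k0 : ℤ) ω} ∩ {ω | r * a n < X 0 ω}) := by
        intro ω hω
        refine ⟨?_, hω.1⟩
        rw [hkk]
        exact lt_trans hra hω.2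
      rw [heq']
      exact ENNReal.toReal_mono (measure_ne_top _ _) (measure_mono hsub)
    · -- k > 0
      have hkk : (k0 : ℤ) = k := by rw [hk0def]; omega
      rw [hq'def]
      simp only
      have hsub : ({ω | r * a n < X k ω} ∩ {ω | a n < X 0 ω})
          ⊆ ({ω | r * a n < X (k0 : ℤ) ω} ∩ {ω | r * a n < X 0 ω}) := by
        intro ω hω
        exact ⟨by rw [hkk]; exact hω.1, lt_trans hra hω.2⟩
      exact ENNReal.toReal_mono (measure_ne_top _ _) (measure_mono hsub)
  have hden : ∀ n, (P {ω | a n < X 0 ω}).toReal = p n := by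
    intro n
    rw [hpdef]
    simp only
    rw [shift_one hmeas hstat 0 (a n)]
  refine squeeze_zero (fun n => div_nonneg ENNReal.toReal_nonneg ENNReal.toReal_nonneg)
    (g := fun n => q' n / p n) (fun n => ?_) hq'p
  rw [hden n]
  exact (div_le_div_iff_of_pos_right (hppos n)).mpr (hqle n)
end

section
/- Let (X_n)_{n∈ℤ} be a strictly stationary, strongly mixing sequence of nonnegative random variables such that X_1 is regularly varying with index α > 0, let (a_n) be positive reals with n·P(X_1 > a_n) → 1, and assume (X_n) has extremal index θ = 1, i.e., for every u > 0, P(max_{1≤i≤n} X_i ≤ u·a_n) → exp(−u^{−α}). Then for every k ≥ 1, all times 0 = t_0 < t_1 < t_2 < … < t_k ≤ 1 and all x_1,…,x_k > 0: P( max_{1≤i≤⌊n t_j⌋} X_i ≤ x_j·a_n for all j = 1,…,k ) → ∏_{j=1}^k exp( −(t_j − t_{j−1}) · (min_{j ≤ l ≤ k} x_l)^{−α} ) as n → ∞. -/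
open MeasureTheory Filter Topology Finset
open scoped Classical

lemma station_cylinder {Ω : Type*} [MeasurableSpace Ω] (P : Measure Ω)
    (X : ℤ → Ω → ℝ) (hmeas : ∀ i, Measurable (X i))
    (hstat : StrictStationaryZ P X) (h : ℤ) (S : Finset ℤ) (c : ℤ → ℝ) :
    P {ω | ∀ i ∈ S, X (i + h) ω ≤ c i} = P {ω | ∀ i ∈ S, X i ω ≤ c i} := by
  have hA : MeasurableSet {f : ℤ → ℝ | ∀ i ∈ S, f i ≤ c i} := by
    have he : {f : ℤ → ℝ | ∀ i ∈ S, f i ≤ c i} = ⋂ i ∈ (S : Set ℤ), {f | f i ≤ c i} := by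
      ext f; simp
    rw [he]
    exact MeasurableSet.biInter S.countable_toSet (fun i _ =>
      measurableSet_le (measurable_pi_apply i) measurable_const)
  have hm1 : Measurable (fun ω (i : ℤ) => X (i + h) ω) :=
    measurable_pi_lambda _ (fun i => hmeas _)
  have hm2 : Measurable (fun ω (i : ℤ) => X i ω) :=
    measurable_pi_lambda _ (fun i => hmeas _)
  have hc := congrArg (fun μ : Measure (ℤ → ℝ) => μ {f | ∀ i ∈ S, f i ≤ c i}) (hstat h)
  simp only [Measure.map_apply hm1 hA, Measure.map_apply hm2 hA] at hc
  convert hc using 2 <;> ext ω <;> simp [Set.preimage, Set.mem_setOf_eq]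

lemma station_le {Ω : Type*} [MeasurableSpace Ω] (P : Measure Ω)
    (X : ℤ → Ω → ℝ) (hmeas : ∀ i, Measurable (X i))
    (hstat : StrictStationaryZ P X) (i : ℤ) (u : ℝ) :
    P {ω | X i ω ≤ u} = P {ω | X 1 ω ≤ u} := by
  have := station_cylinder P X hmeas hstat (i - 1) {(1 : ℤ)} (fun _ => u)
  simpa using this

lemma station_tail {Ω : Type*} [MeasurableSpace Ω] (P : Measure Ω) [IsProbabilityMeasure P]
    (X : ℤ → Ω → ℝ) (hmeas : ∀ i, Measurable (X i))
    (hstat : StrictStationaryZ P X) (i : ℤ) (u : ℝ) :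
    P {ω | u < X i ω} = P {ω | u < X 1 ω} := by
  have h1 : {ω | u < X i ω} = {ω | X i ω ≤ u}ᶜ := by ext ω; simp [not_le]
  have h2 : {ω | u < X 1 ω} = {ω | X 1 ω ≤ u}ᶜ := by ext ω; simp [not_le]
  rw [h1, h2,
    measure_compl (measurableSet_le (hmeas i) measurable_const) (measure_ne_top _ _),
    measure_compl (measurableSet_le (hmeas 1) measurable_const) (measure_ne_top _ _),
    station_le P X hmeas hstat i u]

lemma station_block {Ω : Type*} [MeasurableSpace Ω] (P : Measure Ω)
    (X : ℤ → Ω → ℝ) (hmeas : ∀ i, Measurable (X i))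
    (hstat : StrictStationaryZ P X) (b L : ℕ) (c : ℝ) :
    P {ω | ∀ i ∈ Finset.Icc (b+1) (b+L), X (i:ℤ) ω ≤ c} =
    P {ω | ∀ i ∈ Finset.Icc 1 L, X (i:ℤ) ω ≤ c} := by
  have key := station_cylinder P X hmeas hstat (b : ℤ) (Finset.Icc (1:ℤ) (L:ℤ)) (fun _ => c)
  have e1 : {ω | ∀ i ∈ Finset.Icc (1:ℤ) (L:ℤ), X (i + (b:ℤ)) ω ≤ c} =
      {ω | ∀ i ∈ Finset.Icc (b+1) (b+L), X (i:ℤ) ω ≤ c} := by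
    ext ω
    simp only [Set.mem_setOf_eq, Finset.mem_Icc]
    constructor
    · intro H i ⟨h1, h2⟩
      have := H ((i:ℤ) - b) ⟨by omega, by push_cast; omega⟩
      simpa using this
    · intro H i ⟨h1, h2⟩
      have hi : ∃ j : ℕ, (j:ℤ) = i + b ∧ b+1 ≤ j ∧ j ≤ b + L := by
        refine ⟨(i + b).toNat, ?_, ?_, ?_⟩ <;> omega
      obtain ⟨j, hj, hj1, hj2⟩ := hi
      have := H j ⟨hj1, hj2⟩
      rwa [hj] at this
  have e2 : {ω | ∀ i ∈ Finset.Icc (1:ℤ) (L:ℤ), X i ω ≤ c} =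
      {ω | ∀ i ∈ Finset.Icc 1 L, X (i:ℤ) ω ≤ c} := by
    ext ω
    simp only [Set.mem_setOf_eq, Finset.mem_Icc]
    constructor
    · intro H i ⟨h1, h2⟩
      exact H i ⟨by omega, by omega⟩
    · intro H i ⟨h1, h2⟩
      have hi : ∃ j : ℕ, (j:ℤ) = i ∧ 1 ≤ j ∧ j ≤ L := ⟨i.toNat, by omega, by omega, by omega⟩
      obtain ⟨j, hj, hj1, hj2⟩ := hi
      have := H j ⟨hj1, hj2⟩
      rwa [hj] at this
  rw [e1, e2] at key
  exact key



section tails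
variable {Ω : Type*} [MeasurableSpace Ω] (P : Measure Ω) [IsProbabilityMeasure P]
  (Y : Ω → ℝ) (α : ℝ) (hrv : RegularlyVaryingRV P Y α)
  (a : ℕ → ℝ) (hapos : ∀ n, 0 < a n)
  (han : Tendsto (fun n : ℕ => (n : ℝ) * (P {ω | a n < Y ω}).toReal) atTop (𝓝 1))

include hrv in
lemma tail_pos (x : ℝ) (hx : 0 < x) : 0 < (P {ω | x < Y ω}).toReal :=
  ENNReal.toReal_pos (hrv.1 x hx).ne' (measure_ne_top _ _)

lemma tail_anti {x y : ℝ} (hxy : x ≤ y) :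
    (P {ω | y < Y ω}).toReal ≤ (P {ω | x < Y ω}).toReal := by
  apply ENNReal.toReal_mono (measure_ne_top _ _)
  exact measure_mono (fun ω hω => lt_of_le_of_lt hxy hω)

include han in
lemma tail_to_zero : Tendsto (fun n : ℕ => (P {ω | a n < Y ω}).toReal) atTop (𝓝 0) := by
  have hinv : Tendsto (fun n : ℕ => ((n:ℝ))⁻¹) atTop (𝓝 0) :=
    tendsto_inv_atTop_zero.comp tendsto_natCast_atTop_atTop
  have h1 := han.mul hinv
  rw [mul_zero] at h1
  apply h1.congr'
  filter_upwards [eventually_ge_atTop 1] with n hn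
  have hne : (n:ℝ) ≠ 0 := by
    have : (1:ℝ) ≤ n := by exact_mod_cast hn
    linarith
  field_simp

include hrv hapos han in
lemma a_top : Tendsto a atTop atTop := by
  rw [tendsto_atTop]
  by_contra hcon
  push_neg at hcon
  obtain ⟨b, hb⟩ := hcon
  set b' := max b 1 with hb'def
  have hb' : (0:ℝ) < b' := lt_of_lt_of_le one_pos (le_max_right _ _)
  have hT : 0 < (P {ω | b' < Y ω}).toReal := tail_pos P Y α hrv b' hb'
  have hz := tail_to_zero P Y a han
  have hfreq : ∃ᶠ n in atTop,
      (P {ω | b' < Y ω}).toReal ≤ (P {ω | a n < Y ω}).toReal := by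
    apply hb.mono
    intro n hn
    exact tail_anti P Y (le_of_lt (lt_of_lt_of_le hn (le_max_left b 1)))
  have hev : ∀ᶠ n in atTop, (P {ω | a n < Y ω}).toReal < (P {ω | b' < Y ω}).toReal :=
    hz.eventually (eventually_lt_nhds hT)
  obtain ⟨n, h1, h2⟩ := (hfreq.and_eventually hev).exists
  linarith

include hrv hapos han in
lemma nT_lim (c : ℝ) (hc : 0 < c) :
    Tendsto (fun n : ℕ => (n:ℝ) * (P {ω | c * a n < Y ω}).toReal) atTop (𝓝 (c ^ (-α))) := by
  have hratio : Tendsto (fun n : ℕ =>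
      (P {ω | c * a n < Y ω}).toReal / (P {ω | a n < Y ω}).toReal) atTop (𝓝 (c ^ (-α))) :=
    (hrv.2 c hc).comp (a_top P Y α hrv a hapos han)
  have h1 := han.mul hratio
  rw [one_mul] at h1
  apply h1.congr
  intro n
  have hTa : (P {ω | a n < Y ω}).toReal ≠ 0 := (tail_pos P Y α hrv (a n) (hapos n)).ne'
  field_simp

include hapos in
lemma N_top (N : ℕ → ℕ) (s : ℝ) (hs : 0 < s)
    (hN : Tendsto (fun n : ℕ => (N n : ℝ) / n) atTop (𝓝 s)) :
    Tendsto N atTop atTop := by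
  rw [tendsto_atTop]
  intro b
  have h1 : ∀ᶠ n in atTop, s/2 ≤ (N n:ℝ)/n := hN.eventually (eventually_ge_nhds (by linarith))
  have h2 : ∀ᶠ n : ℕ in atTop, 2*(b:ℝ)/s ≤ (n:ℝ) :=
    tendsto_natCast_atTop_atTop.eventually_ge_atTop _
  filter_upwards [h1, h2, eventually_ge_atTop 1] with n hn1 hn2 hn3
  have hnpos : (0:ℝ) < n := by exact_mod_cast hn3
  have : (b:ℝ) ≤ (N n : ℝ) := by
    have h4 : (s/2) * n ≤ (N n:ℝ) := by
      rw [le_div_iff₀ hnpos] at hn1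
      linarith [hn1]
    have h5 : (b:ℝ) ≤ (s/2) * n := by
      rw [div_le_iff₀ hs] at hn2
      nlinarith
    linarith
  exact_mod_cast this

include hrv hapos han in
lemma NT_comp_lim (N : ℕ → ℕ) (s : ℝ) (hs : 0 < s)
    (hN : Tendsto (fun n : ℕ => (N n : ℝ) / n) atTop (𝓝 s)) (c : ℝ) (hc : 0 < c) :
    Tendsto (fun n : ℕ => (N n:ℝ) * (P {ω | c * a n < Y ω}).toReal)
      atTop (𝓝 (s * c ^ (-α))) := by
  have h1 := hN.mul (nT_lim P Y α hrv a hapos han c hc)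
  apply h1.congr'
  filter_upwards [eventually_ge_atTop 1] with n hn
  have hne : (n:ℝ) ≠ 0 := by
    have : (1:ℝ) ≤ n := by exact_mod_cast hn
    linarith
  field_simp

include hrv hapos han in
lemma a_comp_upper (N : ℕ → ℕ) (s : ℝ) (hs : 0 < s)
    (hN : Tendsto (fun n : ℕ => (N n : ℝ) / n) atTop (𝓝 s))
    (c : ℝ) (hc : 0 < c) (hcs : s * c ^ (-α) < 1) :
    ∀ᶠ n in atTop, a (N n) ≤ c * a n := by
  have hNtop := N_top a hapos N s hs hN
  have h2 : Tendsto (fun n => (N n:ℝ) * (P {ω | a (N n) < Y ω}).toReal) atTop (𝓝 1) :=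
    han.comp hNtop
  have h3 := NT_comp_lim P Y α hrv a hapos han N s hs hN c hc
  set q := (1 + s * c ^ (-α))/2 with hq
  have hq1 : s * c ^ (-α) < q := by rw [hq]; linarith
  have hq2 : q < 1 := by rw [hq]; linarith
  have h2ev : ∀ᶠ n in atTop, q < (N n:ℝ) * (P {ω | a (N n) < Y ω}).toReal :=
    h2.eventually (eventually_gt_nhds hq2)
  have h3ev : ∀ᶠ n in atTop, (N n:ℝ) * (P {ω | c * a n < Y ω}).toReal < q :=
    h3.eventually (eventually_lt_nhds hq1)
  filter_upwards [h2ev, h3ev] with n ha1 ha2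
  by_contra hcon
  push_neg at hcon
  have hmono : (P {ω | a (N n) < Y ω}).toReal ≤ (P {ω | c * a n < Y ω}).toReal :=
    tail_anti P Y (le_of_lt hcon)
  have hNn : (0:ℝ) ≤ (N n:ℝ) := Nat.cast_nonneg _
  nlinarith

include hrv hapos han in
lemma a_comp_lower (N : ℕ → ℕ) (s : ℝ) (hs : 0 < s)
    (hN : Tendsto (fun n : ℕ => (N n : ℝ) / n) atTop (𝓝 s))
    (c : ℝ) (hc : 0 < c) (hcs : 1 < s * c ^ (-α)) :
    ∀ᶠ n in atTop, c * a n ≤ a (N n) := by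
  have hNtop := N_top a hapos N s hs hN
  have h2 : Tendsto (fun n => (N n:ℝ) * (P {ω | a (N n) < Y ω}).toReal) atTop (𝓝 1) :=
    han.comp hNtop
  have h3 := NT_comp_lim P Y α hrv a hapos han N s hs hN c hc
  set q := (1 + s * c ^ (-α))/2 with hq
  have hq1 : q < s * c ^ (-α) := by rw [hq]; linarith
  have hq2 : 1 < q := by rw [hq]; linarith
  have h2ev : ∀ᶠ n in atTop, (N n:ℝ) * (P {ω | a (N n) < Y ω}).toReal < q :=
    h2.eventually (eventually_lt_nhds hq2)
  have h3ev : ∀ᶠ n in atTop, q < (N n:ℝ) * (P {ω | c * a n < Y ω}).toReal :=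
    h3.eventually (eventually_gt_nhds hq1)
  filter_upwards [h2ev, h3ev] with n ha1 ha2
  by_contra hcon
  push_neg at hcon
  have hmono : (P {ω | c * a n < Y ω}).toReal ≤ (P {ω | a (N n) < Y ω}).toReal :=
    tail_anti P Y (le_of_lt hcon)
  have hNn : (0:ℝ) ≤ (N n:ℝ) := Nat.cast_nonneg _
  nlinarith

end tails



section blk
variable {Ω : Type*} [MeasurableSpace Ω] (P : Measure Ω) [IsProbabilityMeasure P]
  (X : ℤ → Ω → ℝ) (α : ℝ) (hα : 0 < α)
  (a : ℕ → ℝ) (hapos : ∀ n, 0 < a n)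
  (hcompU : ∀ (N : ℕ → ℕ) (s : ℝ), 0 < s →
    Tendsto (fun n : ℕ => (N n : ℝ) / n) atTop (𝓝 s) →
    ∀ c : ℝ, 0 < c → s * c ^ (-α) < 1 → ∀ᶠ n in atTop, a (N n) ≤ c * a n)
  (hcompL : ∀ (N : ℕ → ℕ) (s : ℝ), 0 < s →
    Tendsto (fun n : ℕ => (N n : ℝ) / n) atTop (𝓝 s) →
    ∀ c : ℝ, 0 < c → 1 < s * c ^ (-α) → ∀ᶠ n in atTop, c * a n ≤ a (N n))
  (hNtopH : ∀ (N : ℕ → ℕ) (s : ℝ), 0 < s →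
    Tendsto (fun n : ℕ => (N n : ℝ) / n) atTop (𝓝 s) → Tendsto N atTop atTop)
  (hei : ∀ u : ℝ, 0 < u →
    Tendsto (fun n : ℕ =>
        (P {ω | ∀ i ∈ Finset.Icc 1 n, X (i : ℤ) ω ≤ u * a n}).toReal)
      atTop (𝓝 (Real.exp (-u ^ (-α)))))

lemma ev_mono (m : ℕ) {c c' : ℝ} (hcc : c ≤ c') :
    (P {ω | ∀ i ∈ Finset.Icc 1 m, X (i : ℤ) ω ≤ c}).toReal ≤
    (P {ω | ∀ i ∈ Finset.Icc 1 m, X (i : ℤ) ω ≤ c'}).toReal := by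
  apply ENNReal.toReal_mono (measure_ne_top _ _)
  exact measure_mono (fun ω hω i hi => le_trans (hω i hi) hcc)

include hα hapos hcompU hcompL hNtopH hei in
lemma block_limit (N : ℕ → ℕ) (s : ℝ) (hs : 0 < s)
    (hN : Tendsto (fun n : ℕ => (N n : ℝ) / n) atTop (𝓝 s)) (u : ℝ) (hu : 0 < u) :
    Tendsto (fun n : ℕ =>
        (P {ω | ∀ i ∈ Finset.Icc 1 (N n), X (i : ℤ) ω ≤ u * a n}).toReal)
      atTop (𝓝 (Real.exp (-(s * u ^ (-α))))) := by
  have hNtop := hNtopH N s hs hN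
  set v0 : ℝ := u * s ^ (-(α⁻¹)) with hv0def
  have hv0 : 0 < v0 := mul_pos hu (Real.rpow_pos_of_pos hs _)
  have hαne : α ≠ 0 := ne_of_gt hα
  have hv0pow : v0 ^ (-α) = s * u ^ (-α) := by
    rw [hv0def, Real.mul_rpow hu.le (Real.rpow_pos_of_pos hs _).le,
      ← Real.rpow_mul hs.le, show -(α⁻¹) * -α = 1 by field_simp, Real.rpow_one]
    ring
  have hf : ContinuousAt (fun v : ℝ => Real.exp (-v ^ (-α))) v0 := by
    apply Real.continuous_exp.continuousAt.comp
    exact (Real.continuousAt_rpow_const v0 (-α) (Or.inl hv0.ne')).neg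
  rw [Metric.tendsto_nhds]
  intro ε hε
  obtain ⟨δ, hδpos, hδ⟩ := Metric.continuousAt_iff.mp hf (ε/2) (by linarith)
  set δ' : ℝ := min (δ/2) (v0/2) with hδ'def
  have hδ'pos : 0 < δ' := lt_min (by linarith) (by linarith)
  have hδ'le : δ' ≤ δ/2 := min_le_left _ _
  have hδ'le2 : δ' ≤ v0/2 := min_le_right _ _
  set v1 : ℝ := v0 - δ' with hv1def
  set v2 : ℝ := v0 + δ' with hv2def
  have hv1pos : 0 < v1 := by rw [hv1def]; linarith
  have hv2pos : 0 < v2 := by rw [hv2def]; linarith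
  have hv1lt : v1 < v0 := by rw [hv1def]; linarith
  have hv2gt : v0 < v2 := by rw [hv2def]; linarith
  have hfd1 : |Real.exp (-v1 ^ (-α)) - Real.exp (-v0 ^ (-α))| < ε/2 := by
    have := hδ (show dist v1 v0 < δ by
      rw [Real.dist_eq, hv1def, abs_sub_lt_iff]; constructor <;> linarith)
    rwa [Real.dist_eq] at this
  have hfd2 : |Real.exp (-v2 ^ (-α)) - Real.exp (-v0 ^ (-α))| < ε/2 := by
    have := hδ (show dist v2 v0 < δ by
      rw [Real.dist_eq, hv2def, abs_sub_lt_iff]; constructor <;> linarith)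
    rwa [Real.dist_eq] at this
  have key1 : s * (u / v1) ^ (-α) < 1 := by
    have h1 : v0 ^ (-α) < v1 ^ (-α) := Real.rpow_lt_rpow_of_neg hv1pos hv1lt (by linarith)
    rw [hv0pow] at h1
    have h2 : (u / v1) ^ (-α) = u ^ (-α) / v1 ^ (-α) := Real.div_rpow hu.le hv1pos.le (-α)
    have hv1pow : 0 < v1 ^ (-α) := Real.rpow_pos_of_pos hv1pos _
    rw [h2, ← mul_div_assoc, div_lt_one hv1pow]
    exact h1
  have key2 : 1 < s * (u / v2) ^ (-α) := by
    have h1 : v2 ^ (-α) < v0 ^ (-α) := Real.rpow_lt_rpow_of_neg hv0 hv2gt (by linarith)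
    rw [hv0pow] at h1
    have h2 : (u / v2) ^ (-α) = u ^ (-α) / v2 ^ (-α) := Real.div_rpow hu.le hv2pos.le (-α)
    have hv2pow : 0 < v2 ^ (-α) := Real.rpow_pos_of_pos hv2pos _
    rw [h2, ← mul_div_assoc, lt_div_iff₀ hv2pow, one_mul]
    exact h1
  have hup := hcompU N s hs hN (u/v1) (div_pos hu hv1pos) key1
  have hlo := hcompL N s hs hN (u/v2) (div_pos hu hv2pos) key2
  have g1 := (hei v1 hv1pos).comp hNtop
  have g2 := (hei v2 hv2pos).comp hNtop
  have ev1 : ∀ᶠ n in atTop,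
      Real.exp (-v1 ^ (-α)) - ε/2 <
        (P {ω | ∀ i ∈ Finset.Icc 1 (N n), X (i : ℤ) ω ≤ v1 * a (N n)}).toReal :=
    g1.eventually (eventually_gt_nhds (by linarith))
  have ev2 : ∀ᶠ n in atTop,
      (P {ω | ∀ i ∈ Finset.Icc 1 (N n), X (i : ℤ) ω ≤ v2 * a (N n)}).toReal <
        Real.exp (-v2 ^ (-α)) + ε/2 :=
    g2.eventually (eventually_lt_nhds (by linarith))
  filter_upwards [hup, hlo, ev1, ev2] with n hupn hlon hev1 hev2
  have hl1 : v1 * a (N n) ≤ u * a n := by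
    have := mul_le_mul_of_nonneg_left hupn hv1pos.le
    rwa [show v1 * (u / v1 * a n) = u * a n by field_simp] at this
  have hl2 : u * a n ≤ v2 * a (N n) := by
    have := mul_le_mul_of_nonneg_left hlon hv2pos.le
    rwa [show v2 * (u / v2 * a n) = u * a n by field_simp] at this
  have hlow := (ev_mono P X (N n) hl1).trans_lt' hev1
  have hhigh := (ev_mono P X (N n) hl2).trans_lt hev2
  rw [Real.dist_eq, abs_sub_lt_iff]
  rw [abs_sub_lt_iff] at hfd1 hfd2
  rw [← hv0pow]
  constructor <;> linarith
end blk



def Ev {Ω : Type*} (X : ℤ → Ω → ℝ) (S : Finset ℕ) (c : ℝ) : Set Ω :=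
  {ω | ∀ i ∈ S, X (i : ℤ) ω ≤ c}

section mix
variable {Ω : Type*} [MeasurableSpace Ω] (P : Measure Ω) [IsProbabilityMeasure P]
  (X : ℤ → Ω → ℝ) (hmeas : ∀ i, Measurable (X i))

include hmeas in
lemma Ev_meas (S : Finset ℕ) (c : ℝ) (I : Set ℤ) (hSI : ∀ i ∈ S, (i : ℤ) ∈ I) :
    MeasurableSet[⨆ i ∈ I, MeasurableSpace.comap (X i) inferInstance] (Ev X S c) := by
  have he : Ev X S c = ⋂ i ∈ (S : Set ℕ), (X (i : ℤ)) ⁻¹' (Set.Iic c) := by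
    ext ω; simp [Ev, Set.mem_setOf_eq]
  rw [he]
  apply MeasurableSet.biInter S.countable_toSet
  intro i hi
  have h1 : MeasurableSet[MeasurableSpace.comap (X (i : ℤ)) inferInstance]
      ((X (i : ℤ)) ⁻¹' (Set.Iic c)) := ⟨Set.Iic c, measurableSet_Iic, rfl⟩
  have h2 : MeasurableSpace.comap (X (i : ℤ)) inferInstance ≤
      ⨆ i ∈ I, MeasurableSpace.comap (X i) inferInstance := by
    apply le_biSup (fun i => MeasurableSpace.comap (X i) inferInstance) (hSI i hi)
  exact h2 _ h1

include hmeas in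
lemma mixing_chain_s9 (αc : ℕ → ℝ)
    (hbd : ∀ (n : ℕ) (j : ℤ) (A B : Set Ω),
      MeasurableSet[⨆ i ∈ {i : ℤ | i ≤ j}, MeasurableSpace.comap (X i) inferInstance] A →
      MeasurableSet[⨆ i ∈ {i : ℤ | j + (n : ℤ) ≤ i},
        MeasurableSpace.comap (X i) inferInstance] B →
      |(P (A ∩ B)).toReal - (P A).toReal * (P B).toReal| ≤ αc n)
    (hnn : ∀ g, 0 ≤ αc g)
    (g : ℕ) (K : ℕ) (S : ℕ → Finset ℕ) (c : ℕ → ℝ) (bnd : ℕ → ℤ)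
    (hS : ∀ r, r ≤ K → ∀ i ∈ S r, (i : ℤ) ≤ bnd r)
    (hsep : ∀ r r', r < r' → r' ≤ K → ∀ i ∈ S r', bnd r + (g : ℤ) ≤ (i : ℤ)) :
    ∀ d r, K + 1 - r ≤ d →
      |(P (⋂ j ∈ Finset.Icc r K, Ev X (S j) (c j))).toReal -
        ∏ j ∈ Finset.Icc r K, (P (Ev X (S j) (c j))).toReal| ≤ (d : ℝ) * αc g := by
  intro d
  induction d with
  | zero =>
    intro r hr
    have hempty : Finset.Icc r K = ∅ := by
      rw [Finset.Icc_eq_empty_iff]; omega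
    rw [hempty]
    simp
  | succ d ih =>
    intro r hr
    by_cases hrK : K < r
    · have hempty : Finset.Icc r K = ∅ := by
        rw [Finset.Icc_eq_empty_iff]; omega
      rw [hempty]
      simp
      exact mul_nonneg (by positivity) (hnn g)
    · push_neg at hrK
      have hins : Finset.Icc r K = insert r (Finset.Icc (r+1) K) := by
        ext y; simp only [Finset.mem_Icc, Finset.mem_insert]; omega
      have hnotmem : r ∉ Finset.Icc (r+1) K := by simp
      rw [hins, Finset.set_biInter_insert, Finset.prod_insert hnotmem]
      set A := Ev X (S r) (c r) with hA
      set R := ⋂ j ∈ Finset.Icc (r+1) K, Ev X (S j) (c j) with hR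
      have measA : MeasurableSet[⨆ i ∈ {i : ℤ | i ≤ bnd r},
          MeasurableSpace.comap (X i) inferInstance] A :=
        Ev_meas X hmeas (S r) (c r) _ (fun i hi => hS r hrK i hi)
      have measR : MeasurableSet[⨆ i ∈ {i : ℤ | bnd r + (g : ℤ) ≤ i},
          MeasurableSpace.comap (X i) inferInstance] R := by
        apply MeasurableSet.biInter (Finset.Icc (r+1) K).countable_toSet
        intro j hj
        simp only [Finset.coe_Icc, Set.mem_Icc] at hj
        exact Ev_meas X hmeas (S j) (c j) _ (fun i hi => hsep r j (by omega) (by omega) i hi)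
      have hmixAB := hbd g (bnd r) A R measA measR
      have hIH := ih (r+1) (by omega)
      have tri := abs_sub_le ((P (A ∩ R)).toReal)
        ((P A).toReal * (P R).toReal)
        ((P A).toReal * ∏ j ∈ Finset.Icc (r+1) K, (P (Ev X (S j) (c j))).toReal)
      have heq : |(P A).toReal * (P R).toReal -
          (P A).toReal * ∏ j ∈ Finset.Icc (r+1) K, (P (Ev X (S j) (c j))).toReal| =
          (P A).toReal * |(P R).toReal -
            ∏ j ∈ Finset.Icc (r+1) K, (P (Ev X (S j) (c j))).toReal| := by
        rw [← mul_sub, abs_mul, abs_of_nonneg ENNReal.toReal_nonneg]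
      have hPA1 : (P A).toReal ≤ 1 :=
        ENNReal.toReal_mono ENNReal.one_ne_top prob_le_one
      have hPA0 : 0 ≤ (P A).toReal := ENNReal.toReal_nonneg
      have habs0 : 0 ≤ |(P R).toReal -
          ∏ j ∈ Finset.Icc (r+1) K, (P (Ev X (S j) (c j))).toReal| := abs_nonneg _
      have hmul : (P A).toReal * |(P R).toReal -
          ∏ j ∈ Finset.Icc (r+1) K, (P (Ev X (S j) (c j))).toReal| ≤ (d : ℝ) * αc g := by
        calc (P A).toReal * |(P R).toReal - _| ≤ 1 * |(P R).toReal - _| :=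
              mul_le_mul_of_nonneg_right hPA1 habs0
        _ = |(P R).toReal - _| := one_mul _
        _ ≤ (d : ℝ) * αc g := hIH
      push_cast
      calc |(P (A ∩ R)).toReal - (P A).toReal * ∏ j ∈ Finset.Icc (r+1) K,
            (P (Ev X (S j) (c j))).toReal| ≤ _ := tri
      _ ≤ αc g + (d : ℝ) * αc g := by
          rw [heq]
          exact add_le_add hmixAB hmul
      _ = ((d : ℝ) + 1) * αc g := by ring

end mix

lemma prod_sub_prod_le (S : Finset ℕ) (f g : ℕ → ℝ)
    (h0 : ∀ j ∈ S, 0 ≤ g j) (h1 : ∀ j ∈ S, g j ≤ f j) (h2 : ∀ j ∈ S, f j ≤ 1) :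
    ∏ j ∈ S, f j - ∏ j ∈ S, g j ≤ ∑ j ∈ S, (f j - g j) := by
  induction S using Finset.induction_on with
  | empty => simp
  | @insert a S ha ih =>
    rw [Finset.prod_insert ha, Finset.prod_insert ha, Finset.sum_insert ha]
    have h0' : ∀ j ∈ S, 0 ≤ g j := fun j hj => h0 j (Finset.mem_insert_of_mem hj)
    have h1' : ∀ j ∈ S, g j ≤ f j := fun j hj => h1 j (Finset.mem_insert_of_mem hj)
    have h2' : ∀ j ∈ S, f j ≤ 1 := fun j hj => h2 j (Finset.mem_insert_of_mem hj)
    have hih := ih h0' h1' h2'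
    have hga : 0 ≤ g a := h0 a (Finset.mem_insert_self a S)
    have hfa : g a ≤ f a := h1 a (Finset.mem_insert_self a S)
    have hfa1 : f a ≤ 1 := h2 a (Finset.mem_insert_self a S)
    have hgS0 : 0 ≤ ∏ j ∈ S, g j := Finset.prod_nonneg h0'
    have hgS1 : ∏ j ∈ S, g j ≤ 1 :=
      Finset.prod_le_one h0' (fun j hj => le_trans (h1' j hj) (h2' j hj))
    have hmono : ∏ j ∈ S, g j ≤ ∏ j ∈ S, f j := Finset.prod_le_prod h0' h1'
    nlinarith



lemma sqrt_tendsto_atTop : Tendsto Nat.sqrt atTop atTop := by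
  rw [tendsto_atTop]
  intro b
  filter_upwards [eventually_ge_atTop (b*b)] with n hn
  exact Nat.le_sqrt.mpr hn

lemma sqrt_div_tendsto_zero :
    Tendsto (fun n : ℕ => (Nat.sqrt n : ℝ) / n) atTop (𝓝 0) := by
  have hbound : Tendsto (fun n : ℕ => 1 / (Nat.sqrt n : ℝ)) atTop (𝓝 0) := by
    simp only [one_div]
    exact tendsto_inv_atTop_zero.comp
      (tendsto_natCast_atTop_atTop.comp sqrt_tendsto_atTop)
  apply squeeze_zero_norm' _ hbound
  filter_upwards [eventually_ge_atTop 1] with n hn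
  have hn1 : (1:ℝ) ≤ (n:ℝ) := by exact_mod_cast hn
  have hs1 : 1 ≤ Nat.sqrt n := by
    rw [Nat.le_sqrt]; omega
  have hs1' : (1:ℝ) ≤ (Nat.sqrt n : ℝ) := by exact_mod_cast hs1
  have hsq : (Nat.sqrt n : ℝ) * (Nat.sqrt n : ℝ) ≤ (n:ℝ) := by
    exact_mod_cast Nat.sqrt_le n
  rw [Real.norm_eq_abs, abs_of_nonneg (by positivity)]
  rw [div_le_div_iff₀ (by linarith) (by linarith)]
  nlinarith

lemma incl_bound {Ω : Type*} [MeasurableSpace Ω] (P : Measure Ω) [IsProbabilityMeasure P]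
    (U V : Set Ω) (F : Finset ℕ) (W : ℕ → Set Ω)
    (hsub : U ⊆ V ∪ ⋃ j ∈ F, W j) :
    (P U).toReal ≤ (P V).toReal + ∑ j ∈ F, (P (W j)).toReal := by
  have h1 : P U ≤ P V + ∑ j ∈ F, P (W j) := by
    calc P U ≤ P (V ∪ ⋃ j ∈ F, W j) := measure_mono hsub
    _ ≤ P V + P (⋃ j ∈ F, W j) := measure_union_le _ _
    _ ≤ P V + ∑ j ∈ F, P (W j) := add_le_add le_rfl (measure_biUnion_finset_le F W)
  have hsne : (∑ j ∈ F, P (W j)) ≠ ⊤ := by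
    exact ENNReal.sum_ne_top.mpr (fun j _ => measure_ne_top _ _)
  have h2 : (P V + ∑ j ∈ F, P (W j)) ≠ ⊤ :=
    ENNReal.add_ne_top.mpr ⟨measure_ne_top _ _, hsne⟩
  calc (P U).toReal ≤ (P V + ∑ j ∈ F, P (W j)).toReal := ENNReal.toReal_mono h2 h1
  _ = (P V).toReal + (∑ j ∈ F, P (W j)).toReal :=
      ENNReal.toReal_add (measure_ne_top _ _) hsne
  _ = (P V).toReal + ∑ j ∈ F, (P (W j)).toReal := by
      rw [ENNReal.toReal_sum (fun j _ => measure_ne_top _ _)]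

theorem main_aux {Ω : Type*} [MeasurableSpace Ω] (P : Measure Ω) [IsProbabilityMeasure P]
    (X : ℤ → Ω → ℝ) (hmeas : ∀ i, Measurable (X i))
    (α : ℝ)
    (αc : ℕ → ℝ) (hαc0 : Tendsto αc atTop (𝓝 0))
    (hαcbd : ∀ (n : ℕ) (j : ℤ) (A B : Set Ω),
      MeasurableSet[⨆ i ∈ {i : ℤ | i ≤ j}, MeasurableSpace.comap (X i) inferInstance] A →
      MeasurableSet[⨆ i ∈ {i : ℤ | j + (n : ℤ) ≤ i},
        MeasurableSpace.comap (X i) inferInstance] B →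
      |(P (A ∩ B)).toReal - (P A).toReal * (P B).toReal| ≤ αc n)
    (hαcnn : ∀ g, 0 ≤ αc g)
    (a : ℕ → ℝ) (hapos : ∀ n, 0 < a n)
    (htail : ∀ (i : ℤ) (u : ℝ), P {ω | u < X i ω} = P {ω | u < X 1 ω})
    (hshift : ∀ (b L : ℕ) (c : ℝ),
      P (Ev X (Finset.Icc (b+1) (b+L)) c) = P (Ev X (Finset.Icc 1 L) c))
    (hblk : ∀ (M : ℕ → ℕ) (s : ℝ), 0 < s →
      Tendsto (fun n : ℕ => (M n : ℝ)/n) atTop (𝓝 s) →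
      ∀ u : ℝ, 0 < u → Tendsto (fun n : ℕ => (P (Ev X (Finset.Icc 1 (M n)) (u * a n))).toReal)
        atTop (𝓝 (Real.exp (-(s * u ^ (-α))))))
    (hnT : ∀ c : ℝ, 0 < c →
      Tendsto (fun n : ℕ => (n:ℝ) * (P {ω | c * a n < X 1 ω}).toReal) atTop (𝓝 (c ^ (-α))))
    (k : ℕ) (hk : 1 ≤ k)
    (m : ℕ → ℝ) (hmpos : ∀ j, 1 ≤ j → j ≤ k → 0 < m j)
    (hm1le : ∀ j, 1 ≤ j → j ≤ k → m 1 ≤ m j)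
    (NN : ℕ → ℕ → ℕ)
    (hNmono : ∀ j1 j2 n, j1 ≤ j2 → j2 ≤ k → NN j1 n ≤ NN j2 n)
    (s : ℕ → ℝ) (hspos : ∀ j, 1 ≤ j → j ≤ k → 0 < s j)
    (hLratio : ∀ j, 1 ≤ j → j ≤ k →
      Tendsto (fun n : ℕ => ((NN j n - NN (j-1) n : ℕ) : ℝ)/n) atTop (𝓝 (s j))) :
    Tendsto (fun n : ℕ =>
        (P (⋂ j ∈ Finset.Icc 1 k,
          Ev X (Finset.Icc (NN (j-1) n + 1) (NN j n)) (m j * a n))).toReal)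
      atTop
      (𝓝 (∏ j ∈ Finset.Icc 1 k, Real.exp (-(s j * (m j) ^ (-α))))) := by
  have hm1pos : 0 < m 1 := hmpos 1 le_rfl hk
  have htanti : ∀ (u v : ℝ), u ≤ v →
      (P {ω | v < X 1 ω}).toReal ≤ (P {ω | u < X 1 ω}).toReal := fun u v huv =>
    ENNReal.toReal_mono (measure_ne_top _ _)
      (measure_mono (fun ω hω => lt_of_le_of_lt huv hω))
  -- limit of the untrimmed block product
  have hql : Tendsto (fun n : ℕ => ∏ j ∈ Finset.Icc 1 k,
      (P (Ev X (Finset.Icc (NN (j-1) n + 1) (NN j n)) (m j * a n))).toReal) atTop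
      (𝓝 (∏ j ∈ Finset.Icc 1 k, Real.exp (-(s j * (m j) ^ (-α))))) := by
    apply tendsto_finset_prod
    intro j hj
    rw [Finset.mem_Icc] at hj
    have hmj := hmpos j hj.1 hj.2
    have heq : ∀ n, (P (Ev X (Finset.Icc (NN (j-1) n + 1) (NN j n)) (m j * a n))).toReal
        = (P (Ev X (Finset.Icc 1 (NN j n - NN (j-1) n)) (m j * a n))).toReal := by
      intro n
      have hmn : NN (j-1) n ≤ NN j n := hNmono (j-1) j n (by omega) hj.2
      have h2 := hshift (NN (j-1) n) (NN j n - NN (j-1) n) (m j * a n)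
      rw [Nat.add_sub_cancel' hmn] at h2
      rw [h2]
    have hb := hblk (fun n => NN j n - NN (j-1) n) (s j) (hspos j hj.1 hj.2)
      (hLratio j hj.1 hj.2) (m j) hmj
    exact Tendsto.congr (fun n => (heq n).symm) hb
  -- the mixing chain bound on trimmed blocks
  have hchain : ∀ n, |(P (⋂ j ∈ Finset.Icc 1 k,
      Ev X (Finset.Icc (NN (j-1) n + 1) (NN j n - Nat.sqrt n)) (m j * a n))).toReal -
      ∏ j ∈ Finset.Icc 1 k,
        (P (Ev X (Finset.Icc (NN (j-1) n + 1) (NN j n - Nat.sqrt n)) (m j * a n))).toReal| ≤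
      (k:ℝ) * αc (Nat.sqrt n + 1) := by
    intro n
    have hS : ∀ r, r ≤ k → ∀ i ∈ Finset.Icc (NN (r-1) n + 1) (NN r n - Nat.sqrt n),
        (i:ℤ) ≤ (NN r n : ℤ) - (Nat.sqrt n : ℤ) := by
      intro r hr i hi; rw [Finset.mem_Icc] at hi; omega
    have hsep : ∀ r r', r < r' → r' ≤ k →
        ∀ i ∈ Finset.Icc (NN (r'-1) n + 1) (NN r' n - Nat.sqrt n),
        (NN r n : ℤ) - (Nat.sqrt n:ℤ) + ((Nat.sqrt n + 1 : ℕ) : ℤ) ≤ (i:ℤ) := by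
      intro r r' hrr hr' i hi; rw [Finset.mem_Icc] at hi
      have := hNmono r (r'-1) n (by omega) (by omega)
      push_cast
      omega
    have := mixing_chain_s9 P X hmeas αc hαcbd hαcnn (Nat.sqrt n + 1) k
        (fun j => Finset.Icc (NN (j-1) n + 1) (NN j n - Nat.sqrt n)) (fun j => m j * a n)
        (fun j => (NN j n : ℤ) - (Nat.sqrt n : ℤ)) hS hsep k 1 (by omega)
    simpa using this
  -- sum of tails over a trimmed gap
  have hsumb : ∀ n j, 1 ≤ j → j ≤ k →
      ∑ i ∈ Finset.Icc (NN j n - Nat.sqrt n + 1) (NN j n),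
        (P {ω | m j * a n < X (i:ℤ) ω}).toReal ≤
      (Nat.sqrt n:ℝ) * (P {ω | m 1 * a n < X 1 ω}).toReal := by
    intro n j hj1 hjk
    have hsum : ∑ i ∈ Finset.Icc (NN j n - Nat.sqrt n + 1) (NN j n),
        (P {ω | m j * a n < X (i:ℤ) ω}).toReal =
        ((Finset.Icc (NN j n - Nat.sqrt n + 1) (NN j n)).card : ℝ) *
          (P {ω | m j * a n < X 1 ω}).toReal := by
      rw [Finset.sum_congr rfl (fun i _ => by rw [htail (i:ℤ) (m j * a n)]),
        Finset.sum_const, nsmul_eq_mul]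
    rw [hsum]
    have hcard : ((Finset.Icc (NN j n - Nat.sqrt n + 1) (NN j n)).card : ℝ) ≤ (Nat.sqrt n : ℝ) := by
      rw [Nat.card_Icc]
      have : NN j n + 1 - (NN j n - Nat.sqrt n + 1) ≤ Nat.sqrt n := by omega
      exact_mod_cast this
    have htle : (P {ω | m j * a n < X 1 ω}).toReal ≤ (P {ω | m 1 * a n < X 1 ω}).toReal :=
      htanti _ _ (mul_le_mul_of_nonneg_right (hm1le j hj1 hjk) (hapos n).le)
    exact mul_le_mul hcard htle ENNReal.toReal_nonneg (Nat.cast_nonneg _)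
  -- trimmed ⊇ untrimmed
  have hBsubA : ∀ n j,
      Ev X (Finset.Icc (NN (j-1) n + 1) (NN j n)) (m j * a n) ⊆
      Ev X (Finset.Icc (NN (j-1) n + 1) (NN j n - Nat.sqrt n)) (m j * a n) := by
    intro n j ω hω i hi
    rw [Finset.mem_Icc] at hi
    exact hω i (Finset.mem_Icc.mpr ⟨hi.1, by omega⟩)
  -- trimmed ⊆ untrimmed ∪ gap-exceedance
  have hsubAB : ∀ n j,
      Ev X (Finset.Icc (NN (j-1) n + 1) (NN j n - Nat.sqrt n)) (m j * a n) ⊆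
      Ev X (Finset.Icc (NN (j-1) n + 1) (NN j n)) (m j * a n) ∪
        ⋃ i ∈ Finset.Icc (NN j n - Nat.sqrt n + 1) (NN j n), {ω | m j * a n < X (i:ℤ) ω} := by
    intro n j ω hω
    by_cases hB : ∀ i ∈ Finset.Icc (NN (j-1) n + 1) (NN j n), X (i:ℤ) ω ≤ m j * a n
    · exact Or.inl hB
    · right
      push_neg at hB
      obtain ⟨i, hi, hXi⟩ := hB
      rw [Finset.mem_Icc] at hi
      have hig : ¬ (i ≤ NN j n - Nat.sqrt n) := by
        intro hle
        exact absurd (hω i (Finset.mem_Icc.mpr ⟨hi.1, hle⟩)) (not_le.mpr hXi)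
      simp only [Set.mem_iUnion]
      exact ⟨i, Finset.mem_Icc.mpr ⟨by omega, hi.2⟩, hXi⟩
  -- per-block probability bounds
  have hAB : ∀ n j, 1 ≤ j → j ≤ k →
      (P (Ev X (Finset.Icc (NN (j-1) n + 1) (NN j n - Nat.sqrt n)) (m j * a n))).toReal ≤
      (P (Ev X (Finset.Icc (NN (j-1) n + 1) (NN j n)) (m j * a n))).toReal +
        (Nat.sqrt n:ℝ) * (P {ω | m 1 * a n < X 1 ω}).toReal := by
    intro n j hj1 hjk
    have h0 := incl_bound P _ _ (Finset.Icc (NN j n - Nat.sqrt n + 1) (NN j n))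
      (fun i => {ω | m j * a n < X (i:ℤ) ω}) (hsubAB n j)
    exact h0.trans (add_le_add le_rfl (hsumb n j hj1 hjk))
  have hBA : ∀ n j,
      (P (Ev X (Finset.Icc (NN (j-1) n + 1) (NN j n)) (m j * a n))).toReal ≤
      (P (Ev X (Finset.Icc (NN (j-1) n + 1) (NN j n - Nat.sqrt n)) (m j * a n))).toReal :=
    fun n j => ENNReal.toReal_mono (measure_ne_top _ _) (measure_mono (hBsubA n j))
  -- gap exceedance probability bound
  have hUb : ∀ n j, 1 ≤ j → j ≤ k →
      (P (⋃ i ∈ Finset.Icc (NN j n - Nat.sqrt n + 1) (NN j n),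
        {ω | m j * a n < X (i:ℤ) ω})).toReal ≤
      (Nat.sqrt n:ℝ) * (P {ω | m 1 * a n < X 1 ω}).toReal := by
    intro n j hj1 hjk
    have h0 := incl_bound P _ (∅ : Set Ω) (Finset.Icc (NN j n - Nat.sqrt n + 1) (NN j n))
      (fun i => {ω | m j * a n < X (i:ℤ) ω}) (by intro ω hω; exact Or.inr hω)
    simp only [measure_empty, ENNReal.toReal_zero, zero_add] at h0
    exact h0.trans (hsumb n j hj1 hjk)
  -- intersection bounds
  have hImono : ∀ n,
      (P (⋂ j ∈ Finset.Icc 1 k,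
        Ev X (Finset.Icc (NN (j-1) n + 1) (NN j n)) (m j * a n))).toReal ≤
      (P (⋂ j ∈ Finset.Icc 1 k,
        Ev X (Finset.Icc (NN (j-1) n + 1) (NN j n - Nat.sqrt n)) (m j * a n))).toReal := by
    intro n
    apply ENNReal.toReal_mono (measure_ne_top _ _)
    apply measure_mono
    exact Set.iInter₂_mono (fun j hj => hBsubA n j)
  have hIbound : ∀ n,
      (P (⋂ j ∈ Finset.Icc 1 k,
        Ev X (Finset.Icc (NN (j-1) n + 1) (NN j n - Nat.sqrt n)) (m j * a n))).toReal ≤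
      (P (⋂ j ∈ Finset.Icc 1 k,
        Ev X (Finset.Icc (NN (j-1) n + 1) (NN j n)) (m j * a n))).toReal +
      (k:ℝ) * ((Nat.sqrt n:ℝ) * (P {ω | m 1 * a n < X 1 ω}).toReal) := by
    intro n
    have hIsub : (⋂ j ∈ Finset.Icc 1 k,
        Ev X (Finset.Icc (NN (j-1) n + 1) (NN j n - Nat.sqrt n)) (m j * a n)) ⊆
        (⋂ j ∈ Finset.Icc 1 k,
          Ev X (Finset.Icc (NN (j-1) n + 1) (NN j n)) (m j * a n)) ∪
        ⋃ j ∈ Finset.Icc 1 k, ⋃ i ∈ Finset.Icc (NN j n - Nat.sqrt n + 1) (NN j n),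
          {ω | m j * a n < X (i:ℤ) ω} := by
      intro ω hω
      by_cases hB : ω ∈ ⋂ j ∈ Finset.Icc 1 k,
          Ev X (Finset.Icc (NN (j-1) n + 1) (NN j n)) (m j * a n)
      · exact Or.inl hB
      · right
        simp only [Set.mem_iInter, not_forall] at hB
        obtain ⟨j, hj, hnB⟩ := hB
        have hA : ω ∈ Ev X (Finset.Icc (NN (j-1) n + 1) (NN j n - Nat.sqrt n)) (m j * a n) := by
          simp only [Set.mem_iInter] at hω
          exact hω j hj
        rcases hsubAB n j hA with h | h
        · exact absurd h hnB
        · simp only [Set.mem_iUnion]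
          simp only [Set.mem_iUnion] at h
          obtain ⟨i, hi, hXi⟩ := h
          exact ⟨j, hj, i, hi, hXi⟩
    have h0 := incl_bound P _ _ (Finset.Icc 1 k)
      (fun j => ⋃ i ∈ Finset.Icc (NN j n - Nat.sqrt n + 1) (NN j n),
        {ω | m j * a n < X (i:ℤ) ω}) hIsub
    apply h0.trans
    apply add_le_add le_rfl
    calc ∑ j ∈ Finset.Icc 1 k, (P (⋃ i ∈ Finset.Icc (NN j n - Nat.sqrt n + 1) (NN j n),
          {ω | m j * a n < X (i:ℤ) ω})).toReal ≤
        ∑ j ∈ Finset.Icc 1 k, (Nat.sqrt n:ℝ) * (P {ω | m 1 * a n < X 1 ω}).toReal := by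
          apply Finset.sum_le_sum
          intro j hj
          rw [Finset.mem_Icc] at hj
          exact hUb n j hj.1 hj.2
    _ = (k:ℝ) * ((Nat.sqrt n:ℝ) * (P {ω | m 1 * a n < X 1 ω}).toReal) := by
          rw [Finset.sum_const, Nat.card_Icc, nsmul_eq_mul]
          norm_num
  -- product bounds
  have hprod : ∀ n,
      ∏ j ∈ Finset.Icc 1 k,
        (P (Ev X (Finset.Icc (NN (j-1) n + 1) (NN j n - Nat.sqrt n)) (m j * a n))).toReal ≤
      ∏ j ∈ Finset.Icc 1 k,
        (P (Ev X (Finset.Icc (NN (j-1) n + 1) (NN j n)) (m j * a n))).toReal +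
      (k:ℝ) * ((Nat.sqrt n:ℝ) * (P {ω | m 1 * a n < X 1 ω}).toReal) := by
    intro n
    have h1 := prod_sub_prod_le (Finset.Icc 1 k)
      (fun j => (P (Ev X (Finset.Icc (NN (j-1) n + 1) (NN j n - Nat.sqrt n)) (m j * a n))).toReal)
      (fun j => (P (Ev X (Finset.Icc (NN (j-1) n + 1) (NN j n)) (m j * a n))).toReal)
      (fun j _ => ENNReal.toReal_nonneg)
      (fun j _ => hBA n j)
      (fun j _ => ENNReal.toReal_mono ENNReal.one_ne_top prob_le_one)
    have h2 : ∑ j ∈ Finset.Icc 1 k,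
        ((P (Ev X (Finset.Icc (NN (j-1) n + 1) (NN j n - Nat.sqrt n)) (m j * a n))).toReal -
         (P (Ev X (Finset.Icc (NN (j-1) n + 1) (NN j n)) (m j * a n))).toReal) ≤
        (k:ℝ) * ((Nat.sqrt n:ℝ) * (P {ω | m 1 * a n < X 1 ω}).toReal) := by
      calc _ ≤ ∑ j ∈ Finset.Icc 1 k,
            (Nat.sqrt n:ℝ) * (P {ω | m 1 * a n < X 1 ω}).toReal := by
            apply Finset.sum_le_sum
            intro j hj
            rw [Finset.mem_Icc] at hj
            have := hAB n j hj.1 hj.2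
            linarith
      _ = (k:ℝ) * ((Nat.sqrt n:ℝ) * (P {ω | m 1 * a n < X 1 ω}).toReal) := by
            rw [Finset.sum_const, Nat.card_Icc, nsmul_eq_mul]
            norm_num
    linarith
  have hprodmono : ∀ n,
      ∏ j ∈ Finset.Icc 1 k,
        (P (Ev X (Finset.Icc (NN (j-1) n + 1) (NN j n)) (m j * a n))).toReal ≤
      ∏ j ∈ Finset.Icc 1 k,
        (P (Ev X (Finset.Icc (NN (j-1) n + 1) (NN j n - Nat.sqrt n)) (m j * a n))).toReal := by
    intro n
    apply Finset.prod_le_prod (fun j _ => ENNReal.toReal_nonneg) (fun j _ => hBA n j)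
  -- the key difference bound
  have hkey : ∀ n,
      |(P (⋂ j ∈ Finset.Icc 1 k,
        Ev X (Finset.Icc (NN (j-1) n + 1) (NN j n)) (m j * a n))).toReal -
        ∏ j ∈ Finset.Icc 1 k,
          (P (Ev X (Finset.Icc (NN (j-1) n + 1) (NN j n)) (m j * a n))).toReal| ≤
      2 * ((k:ℝ) * ((Nat.sqrt n:ℝ) * (P {ω | m 1 * a n < X 1 ω}).toReal)) +
        (k:ℝ) * αc (Nat.sqrt n + 1) := by
    intro n
    have h1 := hchain n
    have h2 := hImono n
    have h3 := hIbound n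
    have h4 := hprod n
    have h5 := hprodmono n
    have hc0 : 0 ≤ (k:ℝ) * ((Nat.sqrt n:ℝ) * (P {ω | m 1 * a n < X 1 ω}).toReal) := by
      positivity
    rw [abs_le] at h1 ⊢
    constructor <;> [linarith [h1.1, h1.2]; linarith [h1.1, h1.2]]
  -- error term tends to zero
  have hsT : Tendsto (fun n : ℕ =>
      (Nat.sqrt n:ℝ) * (P {ω | m 1 * a n < X 1 ω}).toReal) atTop (𝓝 0) := by
    have h1 := sqrt_div_tendsto_zero.mul (hnT (m 1) hm1pos)
    rw [zero_mul] at h1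
    apply h1.congr'
    filter_upwards [eventually_ge_atTop 1] with n hn
    have hne : (n:ℝ) ≠ 0 := by
      have : (1:ℝ) ≤ n := by exact_mod_cast hn
      linarith
    field_simp
  have hαcomp : Tendsto (fun n : ℕ => αc (Nat.sqrt n + 1)) atTop (𝓝 0) :=
    hαc0.comp (tendsto_atTop_mono (fun n => Nat.le_succ _) sqrt_tendsto_atTop)
  have herr : Tendsto (fun n : ℕ =>
      2 * ((k:ℝ) * ((Nat.sqrt n:ℝ) * (P {ω | m 1 * a n < X 1 ω}).toReal)) +
        (k:ℝ) * αc (Nat.sqrt n + 1)) atTop (𝓝 0) := by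
    have := ((hsT.const_mul ((k:ℝ))).const_mul 2).add (hαcomp.const_mul (k:ℝ))
    simpa using this
  have hdiff : Tendsto (fun n : ℕ =>
      (P (⋂ j ∈ Finset.Icc 1 k,
        Ev X (Finset.Icc (NN (j-1) n + 1) (NN j n)) (m j * a n))).toReal -
      ∏ j ∈ Finset.Icc 1 k,
        (P (Ev X (Finset.Icc (NN (j-1) n + 1) (NN j n)) (m j * a n))).toReal) atTop (𝓝 0) :=
    squeeze_zero_norm (fun n => by rw [Real.norm_eq_abs]; exact hkey n) herr
  have hfinal := hdiff.add hql
  rw [zero_add] at hfinal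
  apply hfinal.congr
  intro n
  ring

/-- Finite-dimensional distributional convergence contained in Theorem 3.2: under
strict stationarity, strong mixing, regular variation and extremal index `θ = 1`, for
times `0 = t_0 < t_1 < ⋯ < t_k ≤ 1` and levels `x_1, …, x_k > 0`,
`P(max_{1 ≤ i ≤ ⌊n t_j⌋} X_i ≤ x_j aₙ for all j) →
  ∏_{j=1}^k exp(−(t_j − t_{j−1}) (min_{j ≤ l ≤ k} x_l)^(−α))`. -/
theorem partial_maxima_fdd_convergence
    {Ω : Type*} [MeasurableSpace Ω] (P : Measure Ω) [IsProbabilityMeasure P]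
    (X : ℤ → Ω → ℝ) (hmeas : ∀ i, Measurable (X i)) (hpos : ∀ i ω, 0 ≤ X i ω)
    (hstat : StrictStationaryZ P X) (hmix : StrongMixingZ P X)
    (α : ℝ) (hα : 0 < α) (hrv : RegularlyVaryingRV P (X 1) α)
    (a : ℕ → ℝ) (hapos : ∀ n, 0 < a n)
    (han : Tendsto (fun n : ℕ => (n : ℝ) * (P {ω | a n < X 1 ω}).toReal) atTop (𝓝 1))
    (hei : ∀ u : ℝ, 0 < u →
      Tendsto (fun n : ℕ =>
          (P {ω | ∀ i ∈ Finset.Icc 1 n, X (i : ℤ) ω ≤ u * a n}).toReal)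
        atTop (𝓝 (Real.exp (-u ^ (-α))))) :
    ∀ k : ℕ, 1 ≤ k → ∀ t x : ℕ → ℝ, t 0 = 0 →
      (∀ j, 1 ≤ j → j ≤ k → t (j - 1) < t j) → t k ≤ 1 →
      (∀ j, 1 ≤ j → j ≤ k → 0 < x j) →
      Tendsto (fun n : ℕ =>
        (P {ω | ∀ j ∈ Finset.Icc 1 k, ∀ i ∈ Finset.Icc 1 ⌊(n : ℝ) * t j⌋₊,
            X (i : ℤ) ω ≤ x j * a n}).toReal)
        atTop
        (𝓝 (∏ j ∈ Finset.Icc 1 k,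
          Real.exp (-(t j - t (j - 1)) *
            (sInf {y : ℝ | ∃ l : ℕ, j ≤ l ∧ l ≤ k ∧ y = x l}) ^ (-α)))) := by
  obtain ⟨αc, hαc0, hαcbd⟩ := hmix
  have hαcnn : ∀ g, 0 ≤ αc g := by
    intro g
    have h := hαcbd g 0 ∅ ∅
      (@MeasurableSet.empty _ (⨆ i ∈ {i : ℤ | i ≤ (0:ℤ)},
        MeasurableSpace.comap (X i) inferInstance))
      (@MeasurableSet.empty _ (⨆ i ∈ {i : ℤ | (0:ℤ) + (g:ℤ) ≤ i},
        MeasurableSpace.comap (X i) inferInstance))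
    simpa using h
  intro k hk t x ht0 hord htk hx
  -- facts about the minima
  have hsetfin : ∀ j : ℕ, {y : ℝ | ∃ l : ℕ, j ≤ l ∧ l ≤ k ∧ y = x l}.Finite := by
    intro j
    have he : {y : ℝ | ∃ l : ℕ, j ≤ l ∧ l ≤ k ∧ y = x l} = x '' (Set.Icc j k) := by
      ext y
      simp only [Set.mem_setOf_eq, Set.mem_image, Set.mem_Icc]
      constructor
      · rintro ⟨l, h1, h2, h3⟩; exact ⟨l, ⟨h1, h2⟩, h3.symm⟩
      · rintro ⟨l, ⟨h1, h2⟩, h3⟩; exact ⟨l, h1, h2, h3.symm⟩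
    rw [he]; exact (Set.finite_Icc j k).image x
  have hsetne : ∀ j, j ≤ k → {y : ℝ | ∃ l : ℕ, j ≤ l ∧ l ≤ k ∧ y = x l}.Nonempty :=
    fun j hj => ⟨x j, j, le_rfl, hj, rfl⟩
  have hmmem : ∀ j, j ≤ k → ∃ l, j ≤ l ∧ l ≤ k ∧
      sInf {y : ℝ | ∃ l' : ℕ, j ≤ l' ∧ l' ≤ k ∧ y = x l'} = x l :=
    fun j hj => (hsetne j hj).csInf_mem (hsetfin j)
  have hmle : ∀ j l, j ≤ l → l ≤ k →
      sInf {y : ℝ | ∃ l' : ℕ, j ≤ l' ∧ l' ≤ k ∧ y = x l'} ≤ x l :=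
    fun j l h1 h2 => csInf_le (hsetfin j).bddBelow ⟨l, h1, h2, rfl⟩
  have hmpos : ∀ j, 1 ≤ j → j ≤ k →
      0 < sInf {y : ℝ | ∃ l : ℕ, j ≤ l ∧ l ≤ k ∧ y = x l} := by
    intro j h1 h2
    obtain ⟨l, hl1, hl2, he⟩ := hmmem j h2
    rw [he]; exact hx l (le_trans h1 hl1) hl2
  have hm1le : ∀ j, 1 ≤ j → j ≤ k →
      sInf {y : ℝ | ∃ l : ℕ, 1 ≤ l ∧ l ≤ k ∧ y = x l} ≤
      sInf {y : ℝ | ∃ l : ℕ, j ≤ l ∧ l ≤ k ∧ y = x l} := by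
    intro j h1 h2
    obtain ⟨l, hl1, hl2, he⟩ := hmmem j h2
    rw [he]; exact hmle 1 l (le_trans h1 hl1) hl2
  -- facts about the times
  have tmono : ∀ j1 j2, j1 ≤ j2 → j2 ≤ k → t j1 ≤ t j2 := by
    intro j1 j2 h12 h2k
    induction j2 with
    | zero => have hz : j1 = 0 := by omega
              rw [hz]
    | succ j2 ih =>
      rcases Nat.eq_or_lt_of_le h12 with he | hlt
      · rw [he]
      · have hj2k : j2 ≤ k := by omega
        have h1 := ih (by omega) hj2k
        have hstep := hord (j2+1) (by omega) h2k
        simp only [Nat.add_sub_cancel] at hstep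
        linarith
  have htnn : ∀ j, j ≤ k → 0 ≤ t j := by
    intro j hj; rw [← ht0]; exact tmono 0 j (Nat.zero_le _) hj
  have hsdiff : ∀ j, 1 ≤ j → j ≤ k → 0 < t j - t (j-1) := by
    intro j h1 h2
    have := hord j h1 h2
    linarith
  -- facts about the index bounds
  have hNmono : ∀ j1 j2 (n : ℕ), j1 ≤ j2 → j2 ≤ k →
      ⌊(n:ℝ) * t j1⌋₊ ≤ ⌊(n:ℝ) * t j2⌋₊ := by
    intro j1 j2 n h12 h2k
    exact Nat.floor_mono (mul_le_mul_of_nonneg_left (tmono j1 j2 h12 h2k) (Nat.cast_nonneg n))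
  have hN0 : ∀ n : ℕ, ⌊(n:ℝ) * t 0⌋₊ = 0 := by
    intro n; rw [ht0]; simp
  have hNratio : ∀ j, j ≤ k →
      Tendsto (fun n : ℕ => ((⌊(n:ℝ) * t j⌋₊ : ℕ) : ℝ)/n) atTop (𝓝 (t j)) := by
    intro j hj
    have h1 := (tendsto_nat_floor_mul_div_atTop (htnn j hj)).comp
      (tendsto_natCast_atTop_atTop (R := ℝ))
    apply h1.congr
    intro n
    simp only [Function.comp_apply]
    rw [mul_comm]
  have hLratio : ∀ j, 1 ≤ j → j ≤ k →
      Tendsto (fun n : ℕ => ((⌊(n:ℝ) * t j⌋₊ - ⌊(n:ℝ) * t (j-1)⌋₊ : ℕ) : ℝ)/n) atTop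
        (𝓝 (t j - t (j-1))) := by
    intro j h1 h2
    have hr := (hNratio j h2).sub (hNratio (j-1) (by omega))
    apply hr.congr
    intro n
    rw [Nat.cast_sub (hNmono (j-1) j n (by omega) h2), sub_div]
  -- auxiliary hypotheses for main_aux
  have htail : ∀ (i : ℤ) (u : ℝ), P {ω | u < X i ω} = P {ω | u < X 1 ω} :=
    fun i u => station_tail P X hmeas hstat i u
  have hshift : ∀ (b L : ℕ) (c : ℝ),
      P (Ev X (Finset.Icc (b+1) (b+L)) c) = P (Ev X (Finset.Icc 1 L) c) :=
    fun b L c => station_block P X hmeas hstat b L c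
  have hnT : ∀ c : ℝ, 0 < c →
      Tendsto (fun n : ℕ => (n:ℝ) * (P {ω | c * a n < X 1 ω}).toReal) atTop (𝓝 (c ^ (-α))) :=
    fun c hc => nT_lim P (X 1) α hrv a hapos han c hc
  have hblk : ∀ (M : ℕ → ℕ) (s : ℝ), 0 < s →
      Tendsto (fun n : ℕ => (M n : ℝ)/n) atTop (𝓝 s) →
      ∀ u : ℝ, 0 < u →
        Tendsto (fun n : ℕ => (P (Ev X (Finset.Icc 1 (M n)) (u * a n))).toReal)
          atTop (𝓝 (Real.exp (-(s * u ^ (-α))))) := by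
    intro M s hs hM u hu
    exact block_limit P X α hα a hapos
      (fun N s hs hN c hc hcs => a_comp_upper P (X 1) α hrv a hapos han N s hs hN c hc hcs)
      (fun N s hs hN c hc hcs => a_comp_lower P (X 1) α hrv a hapos han N s hs hN c hc hcs)
      (fun N s hs hN => N_top a hapos N s hs hN) hei M s hs hM u hu
  have haux := main_aux P X hmeas α αc hαc0 hαcbd hαcnn a hapos htail hshift hblk hnT
    k hk (fun j => sInf {y : ℝ | ∃ l : ℕ, j ≤ l ∧ l ≤ k ∧ y = x l}) hmpos hm1le
    (fun j n => ⌊(n:ℝ) * t j⌋₊) (fun j1 j2 n h12 h2k => hNmono j1 j2 n h12 h2k)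
    (fun j => t j - t (j-1)) hsdiff hLratio
  -- locating the block containing a given index
  have hfind : ∀ (n : ℕ) j, j ≤ k → ∀ i, 1 ≤ i → i ≤ ⌊(n:ℝ) * t j⌋₊ →
      ∃ j', 1 ≤ j' ∧ j' ≤ j ∧ ⌊(n:ℝ) * t (j'-1)⌋₊ < i ∧ i ≤ ⌊(n:ℝ) * t j'⌋₊ := by
    intro n j
    induction j with
    | zero =>
      intro _ i hi1 hiN
      rw [hN0 n] at hiN
      omega
    | succ j ih =>
      intro hjk i hi1 hiN
      by_cases hc : i ≤ ⌊(n:ℝ) * t j⌋₊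
      · obtain ⟨j', h1, h2, h3, h4⟩ := ih (by omega) i hi1 hc
        exact ⟨j', h1, by omega, h3, h4⟩
      · push_neg at hc
        refine ⟨j+1, by omega, le_rfl, ?_, hiN⟩
        simpa using hc
  -- event identity
  have hEq1 : ∀ n : ℕ, {ω | ∀ j ∈ Finset.Icc 1 k, ∀ i ∈ Finset.Icc 1 ⌊(n : ℝ) * t j⌋₊,
      X (i : ℤ) ω ≤ x j * a n} =
      ⋂ j ∈ Finset.Icc 1 k, Ev X (Finset.Icc (⌊(n:ℝ) * t (j-1)⌋₊ + 1) (⌊(n:ℝ) * t j⌋₊))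
        ((sInf {y : ℝ | ∃ l : ℕ, j ≤ l ∧ l ≤ k ∧ y = x l}) * a n) := by
    intro n
    ext ω
    simp only [Set.mem_setOf_eq, Set.mem_iInter, Finset.mem_Icc, Ev]
    constructor
    · intro H j hj i hi
      obtain ⟨l, hl1, hl2, he⟩ := hmmem j hj.2
      rw [he]
      exact H l ⟨le_trans hj.1 hl1, hl2⟩ i ⟨by omega, le_trans hi.2 (hNmono j l n hl1 hl2)⟩
    · intro H j hj i hi
      obtain ⟨j', h1, h2, h3, h4⟩ := hfind n j hj.2 i hi.1 hi.2
      have hXb := H j' ⟨h1, le_trans h2 hj.2⟩ i ⟨by omega, h4⟩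
      calc X (i:ℤ) ω ≤ sInf {y : ℝ | ∃ l : ℕ, j' ≤ l ∧ l ≤ k ∧ y = x l} * a n := hXb
      _ ≤ x j * a n := mul_le_mul_of_nonneg_right (hmle j' j h2 hj.2) (hapos n).le
  -- conclude
  have hstep := haux.congr (fun n => (congrArg (fun s => (P s).toReal) (hEq1 n)).symm)
  have hlim : (∏ j ∈ Finset.Icc 1 k, Real.exp (-(t j - t (j - 1)) *
      (sInf {y : ℝ | ∃ l : ℕ, j ≤ l ∧ l ≤ k ∧ y = x l}) ^ (-α))) =
      ∏ j ∈ Finset.Icc 1 k, Real.exp (-((t j - t (j - 1)) *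
        (sInf {y : ℝ | ∃ l : ℕ, j ≤ l ∧ l ≤ k ∧ y = x l}) ^ (-α))) :=
    Finset.prod_congr rfl (fun j _ => by rw [neg_mul])
  rw [hlim]
  exact hstep
end
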